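/- arXiv:1309.0437 — 8 statements merged into one kernel-verified Lean document; each statement's English description precedes it below -/
import Mathlib

section
/- In the completed Heisenberg algebra ℂ[[t,q,p]] with the Moyal normal-order star product, the star product of 1/(1-p) and 1/(1-q) equals (1/((1-p)(1-q)))·E(t/((1-p)(1-q))), where E(t) = Σ_{n≥0} n!·t^n is the Euler series. In particular this series in t is divergent for any fixed q, p with (1-p)(1-q) ≠ 0. -/
open Finset

/-- Coefficient functions: `f i j k` is the coefficient of `q^i p^j t^k`.
The Moyal normal-order star product `f ⋆ g` in coefficient form. -/
noncomputable def star (f g : ℕ → ℕ → ℕ → ℂ) : ℕ → ℕ → ℕ → ℂ := fun i j l =>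
  ∑ k ∈ range (l + 1), ∑ n ∈ range (l - k + 1), ∑ i1 ∈ range (i + 1), ∑ j1 ∈ range (j + 1),
    (1 / (k.factorial : ℂ)) *
      (((j1 + k).factorial : ℂ) / (j1.factorial : ℂ)) * f i1 (j1 + k) n *
      ((((i - i1) + k).factorial : ℂ) / ((i - i1).factorial : ℂ)) * g ((i - i1) + k) (j - j1) (l - k - n)

/-- `1/(1-p) = Σ_j p^j` -/
def geomP : ℕ → ℕ → ℕ → ℂ := fun i _ k => if i = 0 ∧ k = 0 then 1 else 0

/-- `1/(1-q) = Σ_i q^i` -/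
def geomQ : ℕ → ℕ → ℕ → ℂ := fun _ j k => if j = 0 ∧ k = 0 then 1 else 0

theorem star_apply (f g : ℕ → ℕ → ℕ → ℂ) (i j l : ℕ) :
    star f g i j l =
  ∑ k ∈ range (l + 1), ∑ n ∈ range (l - k + 1), ∑ i1 ∈ range (i + 1), ∑ j1 ∈ range (j + 1),
    (1 / (k.factorial : ℂ)) *
      (((j1 + k).factorial : ℂ) / (j1.factorial : ℂ)) * f i1 (j1 + k) n *
      ((((i - i1) + k).factorial : ℂ) / ((i - i1).factorial : ℂ)) * g ((i - i1) + k) (j - j1) (l - k - n) := rfl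

/-- `1/(1-p) ⋆ 1/(1-q) = (1/((1-p)(1-q)))·E(t/((1-p)(1-q)))` where
`E(t) = Σ n! t^n`; the coefficient of `q^i p^j t^k` in the right-hand side is
`k!·C(i+k,k)·C(j+k,k)`.  In particular, for any fixed `q = a`, `p = b` with
`(1-a)(1-b) ≠ 0`, the resulting power series in `t` diverges for every `t ≠ 0`. -/
theorem star_geomP_geomQ :
    (star geomP geomQ = fun i j k =>
      (k.factorial : ℂ) * ((i + k).choose k) * ((j + k).choose k)) ∧
    (∀ a b : ℂ, (1 - a) * (1 - b) ≠ 0 → ∀ t : ℂ, t ≠ 0 →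
      ¬ Summable (fun k : ℕ =>
        (k.factorial : ℂ) * (t / ((1 - a) * (1 - b))) ^ k / ((1 - a) * (1 - b)))) := by
  constructor
  · funext i j l
    rw [star_apply]
    unfold geomP geomQ
    simp only [mul_ite, mul_one, mul_zero, ite_mul, zero_mul, ite_and]
    rw [Finset.sum_eq_single l]
    · rw [Finset.sum_eq_single 0]
      · rw [Finset.sum_eq_single 0]
        · rw [Finset.sum_eq_single j]
          · simp only [if_pos rfl, Nat.sub_self, if_pos rfl, Nat.sub_zero, if_true]
            rw [Nat.cast_choose ℂ (Nat.le_add_left l i), Nat.cast_choose ℂ (Nat.le_add_left l j)]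
            simp only [Nat.add_sub_cancel]
            have hl : (l.factorial : ℂ) ≠ 0 := Nat.cast_ne_zero.mpr l.factorial_ne_zero
            have hi : (i.factorial : ℂ) ≠ 0 := Nat.cast_ne_zero.mpr i.factorial_ne_zero
            have hj : (j.factorial : ℂ) ≠ 0 := Nat.cast_ne_zero.mpr j.factorial_ne_zero
            field_simp
          · intro b hb hbj
            rw [Finset.mem_range] at hb
            have : ¬ (j - b = 0) := by omega
            simp [this]
          · intro h
            exact absurd (Finset.self_mem_range_succ j) h
        · intro b _ hb
          simp [hb]
        · intro h
          exact absurd (Finset.mem_range.mpr (Nat.succ_pos i)) h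
      · intro b _ hb
        simp [hb]
      · intro h
        exact absurd (Finset.mem_range.mpr (Nat.succ_pos (l - l))) h
    · intro k hk hkl
      rw [Finset.mem_range] at hk
      apply Finset.sum_eq_zero
      intro n hn
      apply Finset.sum_eq_zero
      intro i1 _
      apply Finset.sum_eq_zero
      intro j1 _
      rcases Nat.eq_zero_or_pos n with hn0 | hn0
      · subst hn0
        have h2 : ¬ (l - k - 0 = 0) := by omega
        simp only [Nat.sub_zero] at h2
        simp [h2]
      · simp [hn0.ne']
    · intro h
      exact absurd (Finset.self_mem_range_succ l) h
  · intro a b hab t ht hs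
    set c := (1 - a) * (1 - b) with hc
    have hx : t / c ≠ 0 := div_ne_zero ht hab
    have h0 : Filter.Tendsto (fun k : ℕ => (k.factorial : ℂ) * (t / c) ^ k / c)
        Filter.atTop (nhds 0) := hs.tendsto_atTop_zero
    have h0' : Filter.Tendsto (fun k : ℕ => ‖(k.factorial : ℂ) * (t / c) ^ k / c‖)
        Filter.atTop (nhds 0) := by simpa using h0.norm
    have hnorm : ∀ k : ℕ, ‖(k.factorial : ℂ) * (t / c) ^ k / c‖
        = (k.factorial : ℝ) * ‖t / c‖ ^ k / ‖c‖ := by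
      intro k
      simp [norm_div, norm_mul, norm_pow]
    have hxpos : 0 < ‖t / c‖ := norm_pos_iff.mpr hx
    have hcpos : 0 < ‖c‖ := norm_pos_iff.mpr hab
    have hsmall : Filter.Tendsto (fun k : ℕ => (‖t / c‖⁻¹) ^ k / (k.factorial : ℝ))
        Filter.atTop (nhds 0) := FloorSemiring.tendsto_pow_div_factorial_atTop _
    have hsmall' : Filter.Tendsto (fun k : ℕ => (‖t / c‖⁻¹) ^ k / (k.factorial : ℝ))
        Filter.atTop (nhdsWithin 0 (Set.Ioi 0)) := by
      refine tendsto_nhdsWithin_of_tendsto_nhds_of_eventually_within _ hsmall ?_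
      filter_upwards with k
      exact div_pos (pow_pos (inv_pos.mpr hxpos) k) (by positivity)
    have hbig : Filter.Tendsto (fun k : ℕ => ((‖t / c‖⁻¹) ^ k / (k.factorial : ℝ))⁻¹)
        Filter.atTop Filter.atTop := hsmall'.inv_tendsto_nhdsGT_zero
    have hbig' : Filter.Tendsto (fun k : ℕ => (k.factorial : ℝ) * ‖t / c‖ ^ k)
        Filter.atTop Filter.atTop := by
      refine hbig.congr fun k => ?_
      rw [inv_div, div_eq_mul_inv, inv_pow, inv_inv]
    have hbig'' : Filter.Tendsto (fun k : ℕ => (k.factorial : ℝ) * ‖t / c‖ ^ k / ‖c‖)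
        Filter.atTop Filter.atTop := hbig'.atTop_div_const hcpos
    have := not_tendsto_nhds_of_tendsto_atTop hbig'' 0
    apply this
    refine h0'.congr fun k => ?_
    exact hnorm k
end

section
/- In the Borel dual algebra ℂ[[ξ,q,p]] with product * obtained by conjugating the Moyal normal-order star product with the formal Borel transform t^k ↦ ξ^k/k!, one has p^n * q^m = Σ_{k≥0} C(n,k)·C(m,k)·p^{n-k} q^{m-k} ξ^k for all nonnegative integers n, m. -/
open Finset

/-- The Borel dual product on `ℂ[[ξ,q,p]]` in coefficient form: `f i j l` is the
coefficient of `q^i p^j ξ^l`.  For `f = Σ φ_n ξ^n`, `g = Σ ψ_m ξ^m`,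
`f * g = Σ_l γ_l ξ^l` with
`γ_l = Σ_{n+m+k=l} (n! m! k!/(n+m+k)!)·(1/k!)∂_p^k φ_n·(1/k!)∂_q^k ψ_m`. -/
noncomputable def bstar (f g : ℕ → ℕ → ℕ → ℂ) : ℕ → ℕ → ℕ → ℂ := fun i j l =>
  ∑ k ∈ range (l + 1), ∑ n ∈ range (l - k + 1), ∑ i1 ∈ range (i + 1), ∑ j1 ∈ range (j + 1),
    ((n.factorial : ℂ) * ((l - k - n).factorial : ℂ) * (k.factorial : ℂ) / (l.factorial : ℂ)) *
      (((j1 + k).factorial : ℂ) / ((j1.factorial : ℂ) * (k.factorial : ℂ))) * f i1 (j1 + k) n *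
      ((((i - i1) + k).factorial : ℂ) / (((i - i1).factorial : ℂ) * (k.factorial : ℂ))) *
      g ((i - i1) + k) (j - j1) (l - k - n)

/-- the monomial `p^n` -/
def Pmon (n : ℕ) : ℕ → ℕ → ℕ → ℂ := fun i j k => if i = 0 ∧ j = n ∧ k = 0 then 1 else 0

/-- the monomial `q^m` -/
def Qmon (m : ℕ) : ℕ → ℕ → ℕ → ℂ := fun i j k => if i = m ∧ j = 0 ∧ k = 0 then 1 else 0

/-- in the Borel dual algebra,
`p^n * q^m = Σ_k C(n,k)·C(m,k)·p^{n-k} q^{m-k} ξ^k`. -/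
theorem bstar_pow_p_pow_q (n m : ℕ) :
    bstar (Pmon n) (Qmon m) = fun i j k =>
      if i + k = m ∧ j + k = n then ((n.choose k : ℂ) * (m.choose k : ℂ)) else 0 := by
  funext i j l
  simp only [bstar, Pmon, Qmon]
  rw [Finset.sum_eq_single_of_mem l (self_mem_range_succ l)]
  · simp only [Nat.sub_self, Nat.zero_sub, zero_add, Nat.sub_zero, range_one, sum_singleton, Nat.factorial_zero,
      Nat.cast_one, one_mul]
    rw [Finset.sum_eq_single_of_mem 0 (mem_range.mpr (Nat.succ_pos i))]
    · rw [Finset.sum_eq_single_of_mem j (self_mem_range_succ j)]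
      · simp only [Nat.sub_zero, Nat.sub_self, eq_self_iff_true, true_and, and_true]
        by_cases h : i + l = m ∧ j + l = n
        · obtain ⟨h1, h2⟩ := h
          rw [if_pos h2, if_pos h1, if_pos ⟨h1, h2⟩]
          have e1 : ((j + l).choose l : ℂ) * ((j.factorial : ℂ) * (l.factorial : ℂ)) = ((j+l).factorial : ℂ) := by
            rw [← mul_assoc, ← Nat.cast_mul, ← Nat.cast_mul, Nat.add_choose_mul_factorial_mul_factorial]
          have e2 : ((i + l).choose l : ℂ) * ((i.factorial : ℂ) * (l.factorial : ℂ)) = ((i+l).factorial : ℂ) := by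
            rw [← mul_assoc, ← Nat.cast_mul, ← Nat.cast_mul, Nat.add_choose_mul_factorial_mul_factorial]
          rw [← h2, ← h1]
          have hj : (j.factorial : ℂ) ≠ 0 := Nat.cast_ne_zero.mpr j.factorial_ne_zero
          have hi : (i.factorial : ℂ) ≠ 0 := Nat.cast_ne_zero.mpr i.factorial_ne_zero
          have hl : (l.factorial : ℂ) ≠ 0 := Nat.cast_ne_zero.mpr l.factorial_ne_zero
          field_simp
          rw [← e1, ← e2]
          ring
        · rw [if_neg h]
          rcases not_and_or.mp h with h1 | h2
          · rw [if_neg h1]; ring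
          · rw [if_neg h2]; ring
      · intro j1 hj1 hne
        simp only [mem_range] at hj1
        have hx : j - j1 ≠ 0 := by omega
        simp [hx]
    · intro i1 _ hne
      simp [hne]
  · intro k hk hne
    simp only [mem_range] at hk
    refine Finset.sum_eq_zero fun n' hn' => Finset.sum_eq_zero fun i1 _ =>
      Finset.sum_eq_zero fun j1 _ => ?_
    simp only [mem_range] at hn'
    by_cases hp : i1 = 0 ∧ j1 + k = n ∧ n' = 0
    · obtain ⟨-, -, hn0⟩ := hp
      have hx : l - k - n' ≠ 0 := by omega
      simp [hx]
    · rw [if_neg hp]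
      ring
end

section
/- In the Borel dual algebra, the * product of the geometric series 1/(1-p) and 1/(1-q) equals the geometric series expansion of 1/((1-p)(1-q) - ξ), i.e. Σ_{k≥0} ξ^k/((1-p)^{k+1}(1-q)^{k+1}), as formal power series in ξ, q, p. -/
open Finset

/-- `1/(1-p) * 1/(1-q) = 1/((1-p)(1-q) - ξ) = Σ_k ξ^k/((1-p)^{k+1}(1-q)^{k+1})`,
whose coefficient of `q^i p^j ξ^k` is `C(i+k,k)·C(j+k,k)`. -/
theorem bstar_geomP_geomQ :
    bstar geomP geomQ = fun i j k => (((i + k).choose k : ℂ) * ((j + k).choose k : ℂ)) := by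
  funext i j l
  simp only [bstar, geomP, geomQ]
  rw [Finset.sum_eq_single_of_mem l (self_mem_range_succ l)]
  · rw [Nat.sub_self, Finset.sum_range_one]
    rw [Finset.sum_eq_single_of_mem 0 (Finset.mem_range.mpr (Nat.succ_pos i))]
    · rw [Finset.sum_eq_single_of_mem j (self_mem_range_succ j)]
      · simp only [Nat.sub_self, Nat.sub_zero, and_self, if_true, Nat.factorial_zero,
          Nat.cast_one, one_mul, mul_one]
        rw [Nat.cast_choose ℂ (Nat.le_add_left l i), Nat.cast_choose ℂ (Nat.le_add_left l j)]
        have hi : (i + l) - l = i := by omega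
        have hj : (j + l) - l = j := by omega
        rw [hi, hj]
        have h1 : (l.factorial : ℂ) ≠ 0 := Nat.cast_ne_zero.mpr l.factorial_ne_zero
        have h2 : (i.factorial : ℂ) ≠ 0 := Nat.cast_ne_zero.mpr i.factorial_ne_zero
        have h3 : (j.factorial : ℂ) ≠ 0 := Nat.cast_ne_zero.mpr j.factorial_ne_zero
        field_simp
      · intro j1 hj1 hne
        have : j - j1 ≠ 0 := by simp at hj1; omega
        simp [this]
    · intro i1 _ hne
      simp [hne]
  · intro k hk hne
    apply Finset.sum_eq_zero; intro n hn
    apply Finset.sum_eq_zero; intro i1 _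
    apply Finset.sum_eq_zero; intro j1 _
    by_cases h1 : i1 = 0 ∧ n = 0
    · obtain ⟨rfl, rfl⟩ := h1
      have h2 : l - k ≠ 0 := by simp at hk; omega
      simp [h2]
    · simp [h1]
end

section
/- The Borel dual product * on ℂ[[ξ,q,p]] is associative and satisfies the commutation relation p * q - q * p = -ξ (equivalently p * q = qp + ξ and q * p = qp), and ξ^n * ξ^m = (n! m!/(n+m)!) ξ^{n+m}. -/
open Finset

/-- the variable `p` -/
def Pvar : ℕ → ℕ → ℕ → ℂ := fun i j k => if i = 0 ∧ j = 1 ∧ k = 0 then 1 else 0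

/-- the variable `q` -/
def Qvar : ℕ → ℕ → ℕ → ℂ := fun i j k => if i = 1 ∧ j = 0 ∧ k = 0 then 1 else 0

/-- the monomial `ξ^n` -/
def Xmon (n : ℕ) : ℕ → ℕ → ℕ → ℂ := fun i j k => if i = 0 ∧ j = 0 ∧ k = n then 1 else 0

/-- The normal-order (Moyal) star product in coefficient form. -/
noncomputable def nstar (f g : ℕ → ℕ → ℕ → ℂ) : ℕ → ℕ → ℕ → ℂ := fun i j l =>
  ∑ k ∈ range (l + 1), ∑ n ∈ range (l - k + 1), ∑ i1 ∈ range (i + 1), ∑ j1 ∈ range (j + 1),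
    (k.factorial : ℂ)⁻¹ * ((j1 + k).descFactorial k : ℂ) * f i1 (j1 + k) n *
      (((i - i1) + k).descFactorial k : ℂ) * g ((i - i1) + k) (j - j1) (l - k - n)

/-- The representation of `ℂ[[ξ,q,p]]` on `ℂ[[q,t]]` with `q ↦ q·`, `p ↦ t∂_q`, `t ↦ t·`. -/
noncomputable def rep (f : ℕ → ℕ → ℕ → ℂ) (v : ℕ → ℕ → ℂ) : ℕ → ℕ → ℂ := fun a c =>
  ∑ x ∈ range (a + 1), ∑ y ∈ range (c + 1), ∑ z ∈ range (c - y + 1),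
    f x y z * ((a - x + y).descFactorial y : ℂ) * v (a - x + y) (c - y - z)

lemma descFactorial_add' (n a b : ℕ) :
    n.descFactorial (a + b) = n.descFactorial a * (n - a).descFactorial b := by
  induction b with
  | zero => simp
  | succ b ih =>
    rw [show a + (b+1) = (a+b)+1 by ring, Nat.descFactorial_succ, ih,
      Nat.descFactorial_succ, show n - (a+b) = n - a - b by omega]
    ring

lemma desc_vandermonde0 (j B C : ℕ) :
    ∑ s ∈ range (j + 1), j.choose s * B.descFactorial s * C.descFactorial (j - s)
      = (B + C).descFactorial j := by
  rw [Nat.descFactorial_eq_factorial_mul_choose, Nat.add_choose_eq,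
    Finset.Nat.sum_antidiagonal_eq_sum_range_succ_mk, Finset.mul_sum]
  refine Finset.sum_congr rfl fun s hs => ?_
  simp only [Finset.mem_range] at hs
  rw [Nat.descFactorial_eq_factorial_mul_choose B, Nat.descFactorial_eq_factorial_mul_choose C]
  have h : j.choose s * s.factorial * (j - s).factorial = j.factorial :=
    Nat.choose_mul_factorial_mul_factorial (by omega)
  calc j.choose s * (s.factorial * B.choose s) * ((j-s).factorial * C.choose (j-s))
      = (j.choose s * s.factorial * (j-s).factorial) * (B.choose s * C.choose (j-s)) := by ring
    _ = j.factorial * (B.choose s * C.choose (j - s)) := by rw [h]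

lemma desc_vandermonde (A B j j' : ℕ) :
    ∑ s ∈ range (j + 1), j.choose s * B.descFactorial s * A.descFactorial (j + j' - s)
      = (A - j' + B).descFactorial j * A.descFactorial j' := by
  by_cases hj' : j' ≤ A
  · have key : ∀ s ∈ range (j + 1),
        j.choose s * B.descFactorial s * A.descFactorial (j + j' - s)
          = A.descFactorial j' * (j.choose s * B.descFactorial s * (A - j').descFactorial (j - s)) := by
      intro s hs
      simp only [Finset.mem_range] at hs
      rw [show j + j' - s = j' + (j - s) by omega, descFactorial_add' A j' (j - s)]
      ring
    rw [Finset.sum_congr rfl key, ← Finset.mul_sum, desc_vandermonde0]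
    rw [show B + (A - j') = A - j' + B by ring]
    ring
  · have h1 : A.descFactorial j' = 0 := Nat.descFactorial_eq_zero_iff_lt.mpr (by omega)
    rw [h1, Nat.mul_zero]
    apply Finset.sum_eq_zero
    intro s hs
    simp only [Finset.mem_range] at hs
    rw [Nat.descFactorial_eq_zero_iff_lt.mpr (show A < j + j' - s by omega), Nat.mul_zero]

lemma star_C (A B j j' : ℕ) :
    ∑ s ∈ range (j + 1), ((s.factorial : ℂ))⁻¹ * (j.descFactorial s : ℂ) *
        (B.descFactorial s : ℂ) * (A.descFactorial (j + j' - s) : ℂ)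
      = ((A - j' + B).descFactorial j : ℂ) * (A.descFactorial j' : ℂ) := by
  have key : ∀ s ∈ range (j + 1),
      ((s.factorial : ℂ))⁻¹ * (j.descFactorial s : ℂ) * (B.descFactorial s : ℂ) *
        (A.descFactorial (j + j' - s) : ℂ)
      = ((j.choose s * B.descFactorial s * A.descFactorial (j + j' - s) : ℕ) : ℂ) := by
    intro s _
    have h : (j.descFactorial s : ℂ) = (s.factorial : ℂ) * (j.choose s : ℂ) := by
      rw [Nat.descFactorial_eq_factorial_mul_choose]; push_cast; ring
    have hs : (s.factorial : ℂ) ≠ 0 := Nat.cast_ne_zero.mpr (Nat.factorial_ne_zero s)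
    rw [h]; push_cast; field_simp
  rw [Finset.sum_congr rfl key, ← Nat.cast_sum, desc_vandermonde]
  push_cast; ring

lemma term_expand (f g : ℕ → ℕ → ℕ → ℂ) (v : ℕ → ℕ → ℂ) (a c x1 y1 z1 x2 y2 z2 : ℕ)
    (hx2 : x2 ≤ a - x1 + y1) :
    f x1 y1 z1 * ((a - x1 + y1).descFactorial y1 : ℂ) *
      (g x2 y2 z2 * ((a - x1 + y1 - x2 + y2).descFactorial y2 : ℂ) *
        v (a - x1 + y1 - x2 + y2) (c - y1 - z1 - y2 - z2))
    = ∑ s ∈ range (y1 + 1), (s.factorial : ℂ)⁻¹ * (y1.descFactorial s : ℂ) * f x1 y1 z1 *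
        (x2.descFactorial s : ℂ) * g x2 y2 z2 *
        ((a - x1 + y1 - x2 + y2).descFactorial (y1 + y2 - s) : ℂ) *
        v (a - x1 + y1 - x2 + y2) (c - y1 - z1 - y2 - z2) := by
  have h := star_C (a - x1 + y1 - x2 + y2) x2 y1 y2
  rw [show (a - x1 + y1 - x2 + y2) - y2 + x2 = a - x1 + y1 by omega] at h
  calc f x1 y1 z1 * ((a - x1 + y1).descFactorial y1 : ℂ) *
      (g x2 y2 z2 * ((a - x1 + y1 - x2 + y2).descFactorial y2 : ℂ) *
        v (a - x1 + y1 - x2 + y2) (c - y1 - z1 - y2 - z2))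
      = (((a - x1 + y1).descFactorial y1 : ℂ) *
          ((a - x1 + y1 - x2 + y2).descFactorial y2 : ℂ)) *
          (f x1 y1 z1 * g x2 y2 z2 *
            v (a - x1 + y1 - x2 + y2) (c - y1 - z1 - y2 - z2)) := by ring
    _ = (∑ s ∈ range (y1 + 1), ((s.factorial : ℂ))⁻¹ * (y1.descFactorial s : ℂ) *
          (x2.descFactorial s : ℂ) *
          ((a - x1 + y1 - x2 + y2).descFactorial (y1 + y2 - s) : ℂ)) *
          (f x1 y1 z1 * g x2 y2 z2 *
            v (a - x1 + y1 - x2 + y2) (c - y1 - z1 - y2 - z2)) := by rw [h]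
    _ = _ := by rw [Finset.sum_mul]; exact Finset.sum_congr rfl fun s _ => by ring

lemma key (f g : ℕ → ℕ → ℕ → ℂ) (v : ℕ → ℕ → ℂ) (a c : ℕ) :
    ∑ p ∈ (range (a + 1)).sigma fun X => (range (c + 1)).sigma fun Y =>
        (range (c - Y + 1)).sigma fun Z => (range (Z + 1)).sigma fun k =>
        (range (Z - k + 1)).sigma fun _n => (range (X + 1)).sigma fun _x1 => range (Y + 1),
      (p.2.2.2.1.factorial : ℂ)⁻¹ *
        ((p.2.2.2.2.2.2 + p.2.2.2.1).descFactorial p.2.2.2.1 : ℂ) *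
        f p.2.2.2.2.2.1 (p.2.2.2.2.2.2 + p.2.2.2.1) p.2.2.2.2.1 *
        ((p.1 - p.2.2.2.2.2.1 + p.2.2.2.1).descFactorial p.2.2.2.1 : ℂ) *
        g (p.1 - p.2.2.2.2.2.1 + p.2.2.2.1) (p.2.1 - p.2.2.2.2.2.2)
          (p.2.2.1 - p.2.2.2.1 - p.2.2.2.2.1) *
        ((a - p.1 + p.2.1).descFactorial p.2.1 : ℂ) *
        v (a - p.1 + p.2.1) (c - p.2.1 - p.2.2.1)
    = ∑ q ∈ (range (a + 1)).sigma fun x1 => (range (c + 1)).sigma fun y1 =>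
        (range (c - y1 + 1)).sigma fun z1 => (range (a - x1 + y1 + 1)).sigma fun _x2 =>
        (range (c - y1 - z1 + 1)).sigma fun y2 => range (c - y1 - z1 - y2 + 1),
      f q.1 q.2.1 q.2.2.1 * ((a - q.1 + q.2.1).descFactorial q.2.1 : ℂ) *
        (g q.2.2.2.1 q.2.2.2.2.1 q.2.2.2.2.2 *
          ((a - q.1 + q.2.1 - q.2.2.2.1 + q.2.2.2.2.1).descFactorial q.2.2.2.2.1 : ℂ) *
          v (a - q.1 + q.2.1 - q.2.2.2.1 + q.2.2.2.2.1)
            (c - q.2.1 - q.2.2.1 - q.2.2.2.2.1 - q.2.2.2.2.2)) := by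
  have expand : ∀ q ∈ ((range (a + 1)).sigma fun x1 => (range (c + 1)).sigma fun y1 =>
        (range (c - y1 + 1)).sigma fun z1 => (range (a - x1 + y1 + 1)).sigma fun _x2 =>
        (range (c - y1 - z1 + 1)).sigma fun y2 => range (c - y1 - z1 - y2 + 1)),
      f q.1 q.2.1 q.2.2.1 * ((a - q.1 + q.2.1).descFactorial q.2.1 : ℂ) *
        (g q.2.2.2.1 q.2.2.2.2.1 q.2.2.2.2.2 *
          ((a - q.1 + q.2.1 - q.2.2.2.1 + q.2.2.2.2.1).descFactorial q.2.2.2.2.1 : ℂ) *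
          v (a - q.1 + q.2.1 - q.2.2.2.1 + q.2.2.2.2.1)
            (c - q.2.1 - q.2.2.1 - q.2.2.2.2.1 - q.2.2.2.2.2))
      = ∑ s ∈ range (q.2.1 + 1),
          (s.factorial : ℂ)⁻¹ * (q.2.1.descFactorial s : ℂ) * f q.1 q.2.1 q.2.2.1 *
          (q.2.2.2.1.descFactorial s : ℂ) * g q.2.2.2.1 q.2.2.2.2.1 q.2.2.2.2.2 *
          ((a - q.1 + q.2.1 - q.2.2.2.1 + q.2.2.2.2.1).descFactorial
            (q.2.1 + q.2.2.2.2.1 - s) : ℂ) *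
          v (a - q.1 + q.2.1 - q.2.2.2.1 + q.2.2.2.2.1)
            (c - q.2.1 - q.2.2.1 - q.2.2.2.2.1 - q.2.2.2.2.2) := by
    rintro ⟨x1, y1, z1, x2, y2, z2⟩ hq
    simp only [Finset.mem_sigma, Finset.mem_range] at hq
    exact term_expand f g v a c x1 y1 z1 x2 y2 z2 (by omega)
  rw [Finset.sum_congr rfl expand, Finset.sum_sigma']
  refine Eq.symm ?_
  rw [← Finset.sum_filter_of_ne
    (p := fun (r : Σ _ : ((_ : ℕ) × (_ : ℕ) × (_ : ℕ) × (_ : ℕ) × (_ : ℕ) × ℕ), ℕ) =>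
      r.2 ≤ r.1.2.2.2.1 ∧ r.1.1 + r.1.2.2.2.1 ≤ a + r.2) ?good]
  case good =>
    rintro ⟨⟨x1, y1, z1, x2, y2, z2⟩, s⟩ hr hne
    simp only [Finset.mem_sigma, Finset.mem_range] at hr
    by_contra hbad
    simp only [not_and_or, not_le] at hbad
    apply hne
    dsimp only at *
    rcases hbad with hb | hb
    · have h0 : (x2.descFactorial s) = 0 := Nat.descFactorial_eq_zero_iff_lt.mpr hb
      simp only [h0, Nat.cast_zero, mul_zero, zero_mul]
    · have h0 : ((a - x1 + y1 - x2 + y2).descFactorial (y1 + y2 - s)) = 0 := by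
        apply Nat.descFactorial_eq_zero_iff_lt.mpr
        omega
      simp only [h0, Nat.cast_zero, mul_zero, zero_mul]
  refine Finset.sum_nbij'
    (fun r => ⟨r.1.1 + r.1.2.2.2.1 - r.2, r.1.2.1 - r.2 + r.1.2.2.2.2.1,
        r.1.2.2.1 + r.1.2.2.2.2.2 + r.2, r.2, r.1.2.2.1, r.1.1, r.1.2.1 - r.2⟩)
    (fun p => ⟨⟨p.2.2.2.2.2.1, p.2.2.2.2.2.2 + p.2.2.2.1, p.2.2.2.2.1,
        p.1 - p.2.2.2.2.2.1 + p.2.2.2.1, p.2.1 - p.2.2.2.2.2.2,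
        p.2.2.1 - p.2.2.2.1 - p.2.2.2.2.1⟩, p.2.2.2.1⟩)
    ?hi ?hj ?linv ?rinv ?hterm
  case hi =>
    rintro ⟨⟨x1, y1, z1, x2, y2, z2⟩, s⟩ hr
    simp only [Finset.mem_filter, Finset.mem_sigma, Finset.mem_range] at hr
    simp only [Finset.mem_sigma, Finset.mem_range]
    omega
  case hj =>
    rintro ⟨X, Y, Z, k, n, x1, u⟩ hp
    simp only [Finset.mem_sigma, Finset.mem_range] at hp
    simp only [Finset.mem_filter, Finset.mem_sigma, Finset.mem_range]
    omega
  case linv =>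
    rintro ⟨⟨x1, y1, z1, x2, y2, z2⟩, s⟩ hr
    simp only [Finset.mem_filter, Finset.mem_sigma, Finset.mem_range] at hr
    simp only [Sigma.mk.inj_iff, heq_eq_eq, true_and, and_true]
    omega
  case rinv =>
    rintro ⟨X, Y, Z, k, n, x1, u⟩ hp
    simp only [Finset.mem_sigma, Finset.mem_range] at hp
    simp only [Sigma.mk.inj_iff, heq_eq_eq, true_and, and_true]
    omega
  case hterm =>
    rintro ⟨⟨x1, y1, z1, x2, y2, z2⟩, s⟩ hr
    simp only [Finset.mem_filter, Finset.mem_sigma, Finset.mem_range] at hr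
    dsimp only
    rw [show y1 - s + s = y1 by omega,
      show x1 + x2 - s - x1 + s = x2 by omega,
      show y1 - s + y2 - (y1 - s) = y2 by omega,
      show z1 + z2 + s - s - z1 = z2 by omega,
      show a - (x1 + x2 - s) + (y1 - s + y2) = a - x1 + y1 - x2 + y2 by omega,
      show c - (y1 - s + y2) - (z1 + z2 + s) = c - y1 - z1 - y2 - z2 by omega,
      show y1 - s + y2 = y1 + y2 - s by omega]

lemma rep_mul (f g : ℕ → ℕ → ℕ → ℂ) (v : ℕ → ℕ → ℂ) (a c : ℕ) :
    rep (nstar f g) v a c = rep f (rep g v) a c := by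
  simp only [rep, nstar]
  simp only [Finset.sum_mul, Finset.mul_sum]
  simp only [Finset.sum_sigma']
  exact key f g v a c

lemma desc_vanish (N A0 : ℕ) (co : ℕ → ℂ)
    (h : ∀ A, A0 ≤ A → ∑ y ∈ range (N + 1), co y * (A.descFactorial y : ℂ) = 0) :
    ∀ y ≤ N, co y = 0 := by
  set P : Polynomial ℂ := ∑ y ∈ range (N + 1), Polynomial.C (co y) * descPochhammer ℂ y with hP
  have heval : ∀ A : ℕ, P.eval (A : ℂ)
      = ∑ y ∈ range (N + 1), co y * (A.descFactorial y : ℂ) := by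
    intro A
    rw [hP, Polynomial.eval_finset_sum]
    exact Finset.sum_congr rfl fun y _ => by
      rw [Polynomial.eval_mul, Polynomial.eval_C, descPochhammer_eval_eq_descFactorial]
  have hP0 : P = 0 := by
    apply Polynomial.eq_zero_of_infinite_isRoot
    have hsub : (fun A : ℕ => (A : ℂ)) '' Set.Ici A0 ⊆ {x | P.IsRoot x} := by
      rintro x ⟨A, hA, rfl⟩
      simp only [Set.mem_setOf_eq, Polynomial.IsRoot]
      rw [heval, h A hA]
    have hinf : ((fun A : ℕ => (A : ℂ)) '' Set.Ici A0).Infinite :=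
      (Set.Ici_infinite A0).image (fun x _ y _ hxy => Nat.cast_injective hxy)
    exact hinf.mono hsub
  have hall : ∀ A : ℕ, ∑ y ∈ range (N + 1), co y * (A.descFactorial y : ℂ) = 0 := by
    intro A; rw [← heval, hP0, Polynomial.eval_zero]
  intro y
  induction y using Nat.strong_induction_on with
  | _ y ih =>
    intro hy
    have h2 := hall y
    rw [Finset.sum_eq_single y (fun b hb hbne => ?side) (fun hnotin => ?notin)] at h2
    case side =>
      rcases lt_or_gt_of_ne hbne with hlt | hgt
      · rw [ih b hlt (by simp only [Finset.mem_range] at hb; omega), zero_mul]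
      · rw [Nat.descFactorial_eq_zero_iff_lt.mpr hgt, Nat.cast_zero, mul_zero]
    case notin =>
      exact absurd (Finset.mem_range.mpr (by omega)) hnotin
    have hne : ((y.descFactorial y : ℕ) : ℂ) ≠ 0 := by
      rw [Nat.descFactorial_self]
      exact_mod_cast Nat.factorial_ne_zero y
    exact (mul_eq_zero.mp h2).resolve_right hne

lemma rep_delta (f : ℕ → ℕ → ℕ → ℂ) (I J K A : ℕ) (hA : J + K ≤ A) :
    rep f (fun A' C' => if A' = A ∧ C' = 0 then (1 : ℂ) else 0) (A - J + I) (J + K)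
      = ∑ y ∈ range (J + K + 1),
          (if J ≤ I + y then f (I + y - J) y (J + K - y) else 0) * (A.descFactorial y : ℂ) := by
  unfold rep
  dsimp only
  rw [Finset.sum_comm]
  refine Finset.sum_congr rfl fun y hy => ?_
  simp only [Finset.mem_range] at hy
  by_cases hJ : J ≤ I + y
  · rw [if_pos hJ]
    rw [Finset.sum_eq_single (I + y - J) (fun x hx hxne => ?xside) (fun hnotin => ?xnotin)]
    case xside =>
      apply Finset.sum_eq_zero; intro z hz
      simp only [Finset.mem_range] at hx hz
      rw [if_neg (by rintro ⟨h1, h2⟩; omega), mul_zero]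
    case xnotin =>
      exact absurd (Finset.mem_range.mpr (by omega)) hnotin
    rw [Finset.sum_eq_single (J + K - y) (fun z hz hzne => ?zside) (fun hnotin => ?znotin)]
    case zside =>
      simp only [Finset.mem_range] at hz
      rw [if_neg (by rintro ⟨h1, h2⟩; omega), mul_zero]
    case znotin =>
      exact absurd (Finset.mem_range.mpr (by omega)) hnotin
    rw [show A - J + I - (I + y - J) + y = A by omega,
      show J + K - y - (J + K - y) = 0 by omega, if_pos ⟨rfl, rfl⟩, mul_one]
  · rw [if_neg hJ, zero_mul]
    apply Finset.sum_eq_zero; intro x hx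
    apply Finset.sum_eq_zero; intro z hz
    simp only [Finset.mem_range] at hx hz
    rw [if_neg (by rintro ⟨h1, h2⟩; omega), mul_zero]

lemma rep_cancel (f : ℕ → ℕ → ℕ → ℂ) (h : ∀ v a c, rep f v a c = 0) (I J K : ℕ) :
    f I J K = 0 := by
  have h0 : ∀ A, J + K ≤ A → ∑ y ∈ range (J + K + 1),
      (if J ≤ I + y then f (I + y - J) y (J + K - y) else 0) * (A.descFactorial y : ℂ) = 0 := by
    intro A hA
    rw [← rep_delta f I J K A hA]
    exact h _ _ _
  have hv := desc_vanish (J + K) (J + K) _ h0 J (by omega)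
  rw [if_pos (by omega : J ≤ I + J)] at hv
  rwa [show I + J - J = I by omega, show J + K - J = K by omega] at hv

lemma rep_sub (f g : ℕ → ℕ → ℕ → ℂ) (v : ℕ → ℕ → ℂ) (a c : ℕ) :
    rep (fun i j k => f i j k - g i j k) v a c = rep f v a c - rep g v a c := by
  simp only [rep, sub_mul, Finset.sum_sub_distrib]

lemma rep_mul' (f g : ℕ → ℕ → ℕ → ℂ) (v : ℕ → ℕ → ℂ) :
    rep (nstar f g) v = rep f (rep g v) :=
  funext fun a => funext fun c => rep_mul f g v a c

lemma nstar_assoc (f g h : ℕ → ℕ → ℕ → ℂ) :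
    nstar (nstar f g) h = nstar f (nstar g h) := by
  funext I J K
  have hz : ∀ v a c, rep (fun i j k =>
      nstar (nstar f g) h i j k - nstar f (nstar g h) i j k) v a c = 0 := by
    intro v a c
    rw [rep_sub, rep_mul', rep_mul', rep_mul', rep_mul', sub_self]
  have := rep_cancel _ hz I J K
  exact sub_eq_zero.mp this

lemma fact_desc (j1 k : ℕ) :
    ((j1 + k).descFactorial k : ℂ) = ((j1 + k).factorial : ℂ) / (j1.factorial : ℂ) := by
  have h := Nat.factorial_mul_descFactorial (Nat.le_add_left k j1)
  rw [Nat.add_sub_cancel] at h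
  rw [eq_div_iff (by exact_mod_cast (Nat.factorial_ne_zero j1))]
  exact_mod_cast (by rw [mul_comm]; exact h)

lemma bstar_nstar (f g : ℕ → ℕ → ℕ → ℂ) (i j l : ℕ) :
    (l.factorial : ℂ) * bstar f g i j l
      = nstar (fun i' j' l' => (l'.factorial : ℂ) * f i' j' l')
          (fun i' j' l' => (l'.factorial : ℂ) * g i' j' l') i j l := by
  simp only [bstar, nstar, Finset.mul_sum]
  refine Finset.sum_congr rfl fun k hk => Finset.sum_congr rfl fun n hn =>
    Finset.sum_congr rfl fun i1 _ => Finset.sum_congr rfl fun j1 _ => ?_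
  simp only [Finset.mem_range] at hk hn
  rw [fact_desc j1 k, fact_desc (i - i1) k]
  have hl : (l.factorial : ℂ) ≠ 0 := by exact_mod_cast Nat.factorial_ne_zero l
  have hk' : (k.factorial : ℂ) ≠ 0 := by exact_mod_cast Nat.factorial_ne_zero k
  have hj1 : (j1.factorial : ℂ) ≠ 0 := by exact_mod_cast Nat.factorial_ne_zero j1
  have hii : ((i - i1).factorial : ℂ) ≠ 0 := by exact_mod_cast Nat.factorial_ne_zero (i - i1)
  field_simp

lemma bstar_eq (f g : ℕ → ℕ → ℕ → ℂ) (i j l : ℕ) :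
    bstar f g i j l = (l.factorial : ℂ)⁻¹ *
      nstar (fun i' j' l' => (l'.factorial : ℂ) * f i' j' l')
        (fun i' j' l' => (l'.factorial : ℂ) * g i' j' l') i j l := by
  rw [← bstar_nstar, inv_mul_cancel_left₀ (by exact_mod_cast Nat.factorial_ne_zero l)]

lemma D_bstar (f g : ℕ → ℕ → ℕ → ℂ) :
    (fun i' j' l' => (l'.factorial : ℂ) * bstar f g i' j' l')
      = nstar (fun i' j' l' => (l'.factorial : ℂ) * f i' j' l')
          (fun i' j' l' => (l'.factorial : ℂ) * g i' j' l') := by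
  funext i j l
  exact bstar_nstar f g i j l

lemma bstar_assoc (f g h : ℕ → ℕ → ℕ → ℂ) :
    bstar (bstar f g) h = bstar f (bstar g h) := by
  funext i j l
  rw [bstar_eq (bstar f g) h, bstar_eq f (bstar g h), D_bstar f g, D_bstar g h, nstar_assoc]

lemma bstar_PQ : bstar Pvar Qvar = fun i j k =>
    if (i = 1 ∧ j = 1 ∧ k = 0) ∨ (i = 0 ∧ j = 0 ∧ k = 1) then 1 else 0 := by
  funext i j l
  simp only [bstar, Pvar, Qvar]
  by_cases h1 : i = 1 ∧ j = 1 ∧ l = 0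
  · obtain ⟨rfl, rfl, rfl⟩ := h1
    rw [if_pos (Or.inl ⟨rfl, rfl, rfl⟩)]
    norm_num [Finset.sum_range_succ, Finset.sum_range_one, Nat.factorial]
  · by_cases h2 : i = 0 ∧ j = 0 ∧ l = 1
    · obtain ⟨rfl, rfl, rfl⟩ := h2
      rw [if_pos (Or.inr ⟨rfl, rfl, rfl⟩)]
      norm_num [Finset.sum_range_succ, Finset.sum_range_one, Nat.factorial]
    · rw [if_neg (by tauto)]
      refine Finset.sum_eq_zero fun k hk => Finset.sum_eq_zero fun n' hn' =>
        Finset.sum_eq_zero fun i1 hi1 => Finset.sum_eq_zero fun j1 hj1 => ?_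
      simp only [Finset.mem_range] at hk hn' hi1 hj1
      by_cases c1 : i1 = 0 ∧ j1 + k = 1 ∧ n' = 0
      · obtain ⟨b1, b2, b3⟩ := c1
        rw [if_pos ⟨b1, b2, b3⟩, if_neg (fun hc => by
          obtain ⟨a1, a2, a3⟩ := hc
          exact (by omega : False))]
        simp
      · rw [if_neg c1]
        simp
lemma bstar_QP : bstar Qvar Pvar = fun i j k =>
    if i = 1 ∧ j = 1 ∧ k = 0 then 1 else 0 := by
  funext i j l
  simp only [bstar, Pvar, Qvar]
  by_cases h1 : i = 1 ∧ j = 1 ∧ l = 0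
  · obtain ⟨rfl, rfl, rfl⟩ := h1
    rw [if_pos ⟨rfl, rfl, rfl⟩]
    norm_num [Finset.sum_range_succ, Finset.sum_range_one, Nat.factorial]
  · rw [if_neg h1]
    refine Finset.sum_eq_zero fun k hk => Finset.sum_eq_zero fun n' hn' =>
      Finset.sum_eq_zero fun i1 hi1 => Finset.sum_eq_zero fun j1 hj1 => ?_
    simp only [Finset.mem_range] at hk hn' hi1 hj1
    by_cases c1 : i1 = 1 ∧ j1 + k = 0 ∧ n' = 0
    · obtain ⟨b1, b2, b3⟩ := c1
      rw [if_pos ⟨b1, b2, b3⟩, if_neg (fun hc => by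
        obtain ⟨a1, a2, a3⟩ := hc
        exact (by omega : False))]
      simp
    · rw [if_neg c1]
      simp

lemma bstar_XX (n m : ℕ) : bstar (Xmon n) (Xmon m) = fun i j k =>
    if i = 0 ∧ j = 0 ∧ k = n + m then
      (n.factorial : ℂ) * (m.factorial : ℂ) / ((n + m).factorial : ℂ) else 0 := by
  funext i j l
  simp only [bstar, Xmon]
  by_cases h : i = 0 ∧ j = 0 ∧ l = n + m
  · obtain ⟨rfl, rfl, rfl⟩ := h
    rw [if_pos ⟨rfl, rfl, rfl⟩]
    simp only [Nat.zero_add, Finset.sum_range_one]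
    rw [Finset.sum_eq_single 0 (fun k hk hkne => ?kside) (fun hnotin => ?knotin)]
    case kside =>
      apply Finset.sum_eq_zero; intro n' hn'
      rw [if_neg (fun hc => by obtain ⟨a1, a2, a3⟩ := hc; omega)]
      simp
    case knotin =>
      exact absurd (Finset.mem_range.mpr (by omega)) hnotin
    rw [Finset.sum_eq_single n (fun n' hn' hne => ?nside) (fun hnotin => ?nnotin)]
    case nside =>
      rw [if_neg (fun hc => by obtain ⟨a1, a2, a3⟩ := hc; omega)]
      simp
    case nnotin =>
      exact absurd (Finset.mem_range.mpr (by omega)) hnotin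
    rw [show n + m - 0 - n = m by omega]
    norm_num [Nat.factorial]
  · rw [if_neg h]
    refine Finset.sum_eq_zero fun k hk => Finset.sum_eq_zero fun n' hn' =>
      Finset.sum_eq_zero fun i1 hi1 => Finset.sum_eq_zero fun j1 hj1 => ?_
    simp only [Finset.mem_range] at hk hn' hi1 hj1
    by_cases c1 : i1 = 0 ∧ j1 + k = 0 ∧ n' = n
    · obtain ⟨b1, b2, b3⟩ := c1
      rw [if_pos ⟨b1, b2, b3⟩, if_neg (fun hc => by
        obtain ⟨a1, a2, a3⟩ := hc
        exact h (by omega))]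
      simp
    · rw [if_neg c1]
      simp

/-- the Borel dual product `*` is associative, satisfies
`p * q = qp + ξ` and `q * p = qp` (so `p * q - q * p = ξ`), and
`ξ^n * ξ^m = (n! m!/(n+m)!)·ξ^{n+m}`. -/
theorem bstar_assoc_and_relations :
    (∀ f g h : ℕ → ℕ → ℕ → ℂ, bstar (bstar f g) h = bstar f (bstar g h)) ∧
    (bstar Pvar Qvar = fun i j k =>
      if (i = 1 ∧ j = 1 ∧ k = 0) ∨ (i = 0 ∧ j = 0 ∧ k = 1) then 1 else 0) ∧
    (bstar Qvar Pvar = fun i j k => if i = 1 ∧ j = 1 ∧ k = 0 then 1 else 0) ∧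
    (∀ n m : ℕ, bstar (Xmon n) (Xmon m) = fun i j k =>
      if i = 0 ∧ j = 0 ∧ k = n + m then
        (n.factorial : ℂ) * (m.factorial : ℂ) / ((n + m).factorial : ℂ) else 0) :=
  ⟨fun f g h => bstar_assoc f g h, bstar_PQ, bstar_QP, fun n m => bstar_XX n m⟩
end

section
/- If f, g ∈ ℂ[[ξ,q,p]] are power series whose coefficients define convergent power series (i.e. f, g ∈ ℂ{ξ,q,p}), then their Borel dual product f * g is also a convergent power series. Hence ℂ{ξ,q,p} is a (non-commutative) subalgebra of (ℂ[[ξ,q,p]], *). -/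
open Finset

/-- A power series in `(ξ,q,p)` is convergent (lies in `ℂ{ξ,q,p}`) iff its
coefficients admit a geometric bound. -/
def IsConvergent (f : ℕ → ℕ → ℕ → ℂ) : Prop :=
  ∃ C R : ℝ, 0 < C ∧ 0 < R ∧ ∀ i j k, ‖f i j k‖ ≤ C * R ^ (i + j + k)

private lemma choose_le_two_pow' (n k : ℕ) : n.choose k ≤ 2 ^ n := by
  rcases le_or_gt k n with h | h
  · rw [← Nat.sum_range_choose n]
    exact Finset.single_le_sum (f := fun i => n.choose i) (fun _ _ => Nat.zero_le _)
      (Finset.mem_range.mpr (Nat.lt_succ_of_le h))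
  · simp [Nat.choose_eq_zero_of_lt h]

private lemma fact_add_le (a b : ℕ) : ((a + b).factorial : ℝ) ≤ 2 ^ (a + b) * (a.factorial * b.factorial) := by
  have h := Nat.choose_mul_factorial_mul_factorial (Nat.le_add_right a b)
  have h2 : (a + b).factorial ≤ 2 ^ (a + b) * (a.factorial * b.factorial) := by
    calc (a + b).factorial = (a + b).choose a * a.factorial * (a + b - a).factorial := h.symm
    _ ≤ 2 ^ (a + b) * a.factorial * b.factorial := by
        simp only [Nat.add_sub_cancel_left]
        exact Nat.mul_le_mul_right _ (Nat.mul_le_mul_right _ (choose_le_two_pow' _ _))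
    _ = 2 ^ (a + b) * (a.factorial * b.factorial) := by ring
  exact_mod_cast h2

private lemma fact3_le (n m k : ℕ) :
    (n.factorial * m.factorial * k.factorial : ℕ) ≤ (n + m + k).factorial := by
  calc n.factorial * m.factorial * k.factorial
      ≤ (n + m).factorial * k.factorial :=
        Nat.mul_le_mul_right _ (Nat.le_of_dvd (Nat.factorial_pos _)
          (Nat.factorial_mul_factorial_dvd_factorial_add n m))
    _ ≤ (n + m + k).factorial := Nat.le_of_dvd (Nat.factorial_pos _)
          (Nat.factorial_mul_factorial_dvd_factorial_add (n + m) k)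

/-- the Borel dual product of convergent power series is convergent;
`ℂ{ξ,q,p}` is a subalgebra of `(ℂ[[ξ,q,p]], *)`. -/
theorem bstar_convergent (f g : ℕ → ℕ → ℕ → ℂ)
    (hf : IsConvergent f) (hg : IsConvergent g) : IsConvergent (bstar f g) := by
  obtain ⟨Cf, Rf, hCf, hRf, hbf⟩ := hf
  obtain ⟨Cg, Rg, hCg, hRg, hbg⟩ := hg
  set Rm : ℝ := max (max Rf Rg) 1 with hRm
  have hRm1 : (1 : ℝ) ≤ Rm := le_max_right _ 1
  have hRm0 : (0 : ℝ) < Rm := lt_of_lt_of_le one_pos hRm1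
  have hRfRm : Rf ≤ Rm := le_trans (le_max_left _ _) (le_max_left _ _)
  have hRgRm : Rg ≤ Rm := le_trans (le_max_right _ _) (le_max_left _ _)
  refine ⟨Cf * Cg, (8 * Rm ^ 2) ^ 2, mul_pos hCf hCg, by positivity, ?_⟩
  intro i j l
  -- bound for a single term
  set T : ℝ := Cf * Cg * (4 * Rm ^ 2) ^ (i + j + 2 * l) with hT
  have hbf' : ∀ a b c, a ≤ i → b ≤ j + l → c ≤ l → ‖f a b c‖ ≤ Cf * Rm ^ (i + j + 2 * l) := by
    intro a b c ha hb hc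
    refine (hbf a b c).trans (mul_le_mul_of_nonneg_left ?_ hCf.le)
    calc Rf ^ (a + b + c) ≤ Rm ^ (a + b + c) :=
          pow_le_pow_left₀ hRf.le hRfRm _
      _ ≤ Rm ^ (i + j + 2 * l) := pow_le_pow_right₀ hRm1 (by omega)
  have hbg' : ∀ a b c, a ≤ i + l → b ≤ j → c ≤ l → ‖g a b c‖ ≤ Cg * Rm ^ (i + j + 2 * l) := by
    intro a b c ha hb hc
    refine (hbg a b c).trans (mul_le_mul_of_nonneg_left ?_ hCg.le)
    calc Rg ^ (a + b + c) ≤ Rm ^ (a + b + c) :=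
          pow_le_pow_left₀ hRg.le hRgRm _
      _ ≤ Rm ^ (i + j + 2 * l) := pow_le_pow_right₀ hRm1 (by omega)
  have hterm : ∀ k ∈ range (l + 1), ∀ n ∈ range (l - k + 1), ∀ i1 ∈ range (i + 1),
      ∀ j1 ∈ range (j + 1),
      ‖((n.factorial : ℂ) * ((l - k - n).factorial : ℂ) * (k.factorial : ℂ) / (l.factorial : ℂ)) *
      (((j1 + k).factorial : ℂ) / ((j1.factorial : ℂ) * (k.factorial : ℂ))) * f i1 (j1 + k) n *
      ((((i - i1) + k).factorial : ℂ) / (((i - i1).factorial : ℂ) * (k.factorial : ℂ))) *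
      g ((i - i1) + k) (j - j1) (l - k - n)‖ ≤ T := by
    intro k hk n hn i1 hi1 j1 hj1
    rw [Finset.mem_range] at hk hn hi1 hj1
    have hk' : k ≤ l := by omega
    have hn' : n ≤ l - k := by omega
    have e1 : ‖(n.factorial : ℂ) * ((l - k - n).factorial : ℂ) * (k.factorial : ℂ) / (l.factorial : ℂ)‖ ≤ 1 := by
      rw [norm_div, norm_mul, norm_mul]
      simp only [Complex.norm_natCast]
      rw [div_le_one (by positivity)]
      have := fact3_le n (l - k - n) k
      have hsum : n + (l - k - n) + k = l := by omega
      rw [hsum] at this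
      exact_mod_cast this
    have e2 : ‖((j1 + k).factorial : ℂ) / ((j1.factorial : ℂ) * (k.factorial : ℂ))‖ ≤ 2 ^ (j + l) := by
      rw [norm_div, norm_mul]
      simp only [Complex.norm_natCast]
      rw [div_le_iff₀ (by positivity)]
      calc ((j1 + k).factorial : ℝ) ≤ 2 ^ (j1 + k) * (j1.factorial * k.factorial) :=
            fact_add_le j1 k
        _ ≤ 2 ^ (j + l) * (j1.factorial * k.factorial) := by
            have : (2:ℝ) ^ (j1 + k) ≤ 2 ^ (j + l) :=
              pow_le_pow_right₀ one_le_two (by omega)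
            exact mul_le_mul_of_nonneg_right this (by positivity)
    have e3 : ‖(((i - i1) + k).factorial : ℂ) / (((i - i1).factorial : ℂ) * (k.factorial : ℂ))‖ ≤ 2 ^ (i + l) := by
      rw [norm_div, norm_mul]
      simp only [Complex.norm_natCast]
      rw [div_le_iff₀ (by positivity)]
      calc (((i - i1) + k).factorial : ℝ) ≤ 2 ^ ((i - i1) + k) * ((i - i1).factorial * k.factorial) :=
            fact_add_le (i - i1) k
        _ ≤ 2 ^ (i + l) * ((i - i1).factorial * k.factorial) := by
            have : (2:ℝ) ^ ((i - i1) + k) ≤ 2 ^ (i + l) :=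
              pow_le_pow_right₀ one_le_two (by omega)
            exact mul_le_mul_of_nonneg_right this (by positivity)
    have e4 : ‖f i1 (j1 + k) n‖ ≤ Cf * Rm ^ (i + j + 2 * l) :=
      hbf' _ _ _ (by omega) (by omega) (by omega)
    have e5 : ‖g ((i - i1) + k) (j - j1) (l - k - n)‖ ≤ Cg * Rm ^ (i + j + 2 * l) :=
      hbg' _ _ _ (by omega) (by omega) (by omega)
    simp only [norm_mul]
    calc ‖_‖ * ‖_‖ * ‖f i1 (j1 + k) n‖ * ‖_‖ * ‖g ((i - i1) + k) (j - j1) (l - k - n)‖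
        ≤ 1 * 2 ^ (j + l) * (Cf * Rm ^ (i + j + 2 * l)) * 2 ^ (i + l) *
            (Cg * Rm ^ (i + j + 2 * l)) := by
          gcongr <;> first | exact e1 | exact e2 | exact e3 | exact e4 | exact e5
      _ = Cf * Cg * (2 ^ (j + l) * 2 ^ (i + l) * (Rm ^ (i + j + 2 * l) * Rm ^ (i + j + 2 * l))) := by
          ring
      _ ≤ T := by
          rw [hT]
          have h2 : (2:ℝ) ^ (j + l + (i + l)) ≤ (4:ℝ) ^ (i + j + 2 * l) := by
            have h4 : ((4:ℝ)) ^ (i + j + 2 * l) = 2 ^ (2 * (i + j + 2 * l)) := by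
              rw [pow_mul]; norm_num
            rw [h4]
            exact pow_le_pow_right₀ one_le_two (by omega)
          refine mul_le_mul_of_nonneg_left ?_ (by positivity)
          have e : Rm ^ (i + j + 2 * l) * Rm ^ (i + j + 2 * l)
              = (Rm ^ 2) ^ (i + j + 2 * l) := by
            rw [← pow_add, ← pow_mul]; congr 1; ring
          calc (2:ℝ) ^ (j + l) * 2 ^ (i + l) *
                (Rm ^ (i + j + 2 * l) * Rm ^ (i + j + 2 * l))
              = 2 ^ (j + l + (i + l)) * (Rm ^ 2) ^ (i + j + 2 * l) := by
                rw [← pow_add, e]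
            _ ≤ 4 ^ (i + j + 2 * l) * (Rm ^ 2) ^ (i + j + 2 * l) :=
                mul_le_mul_of_nonneg_right h2 (by positivity)
            _ = (4 * Rm ^ 2) ^ (i + j + 2 * l) := (mul_pow _ _ _).symm
  -- now sum up
  have hsum : ‖bstar f g i j l‖ ≤ (l + 1 : ℝ) * ((l + 1) * ((i + 1) * ((j + 1) * T))) := by
    have hT0 : 0 ≤ T := by
      rcases Finset.mem_range.mpr (Nat.succ_pos l) with _
      exact le_trans (norm_nonneg _) (hterm 0 (by simp) 0 (by simp [Nat.succ_pos]) 0 (by simp) 0 (by simp))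
    unfold bstar
    refine (norm_sum_le _ _).trans ?_
    calc ∑ k ∈ range (l + 1), ‖∑ n ∈ range (l - k + 1), ∑ i1 ∈ range (i + 1), ∑ j1 ∈ range (j + 1), _‖
        ≤ ∑ k ∈ range (l + 1), ((l + 1 : ℝ) * ((i + 1) * ((j + 1) * T))) := by
          refine Finset.sum_le_sum fun k hk => ?_
          refine (norm_sum_le _ _).trans ?_
          calc ∑ n ∈ range (l - k + 1), ‖∑ i1 ∈ range (i + 1), ∑ j1 ∈ range (j + 1), _‖
              ≤ ∑ n ∈ range (l - k + 1), ((i + 1 : ℝ) * ((j + 1) * T)) := by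
                refine Finset.sum_le_sum fun n hn => ?_
                refine (norm_sum_le _ _).trans ?_
                calc ∑ i1 ∈ range (i + 1), ‖∑ j1 ∈ range (j + 1), _‖
                    ≤ ∑ i1 ∈ range (i + 1), ((j + 1 : ℝ) * T) := by
                      refine Finset.sum_le_sum fun i1 hi1 => ?_
                      refine (norm_sum_le _ _).trans ?_
                      calc ∑ j1 ∈ range (j + 1), ‖_‖
                          ≤ ∑ j1 ∈ range (j + 1), T :=
                            Finset.sum_le_sum fun j1 hj1 => hterm k hk n hn i1 hi1 j1 hj1
                        _ = (j + 1 : ℝ) * T := by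
                            rw [Finset.sum_const, Finset.card_range]; simp [nsmul_eq_mul]
                  _ = (i + 1 : ℝ) * ((j + 1) * T) := by
                      rw [Finset.sum_const, Finset.card_range]; simp [nsmul_eq_mul]
            _ = (l - k + 1 : ℕ) * ((i + 1 : ℝ) * ((j + 1) * T)) := by
                rw [Finset.sum_const, Finset.card_range]; simp [nsmul_eq_mul]
            _ ≤ (l + 1 : ℝ) * ((i + 1) * ((j + 1) * T)) := by
                have h : ((l - k + 1 : ℕ) : ℝ) ≤ (l + 1 : ℝ) := by
                  have := Nat.succ_le_succ (Nat.sub_le l k)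
                  exact_mod_cast this
                have hij : (0:ℝ) ≤ (i + 1 : ℝ) * ((j + 1) * T) := by positivity
                exact mul_le_mul_of_nonneg_right h hij
      _ = (l + 1 : ℝ) * ((l + 1) * ((i + 1) * ((j + 1) * T))) := by
          rw [Finset.sum_const, Finset.card_range]; simp [nsmul_eq_mul]
  refine hsum.trans ?_
  have hT0 : (0:ℝ) ≤ T := by
    rw [hT]; positivity
  have h2p : ∀ n : ℕ, ((n:ℝ) + 1) ≤ 2 ^ n := fun n => by
    exact_mod_cast (Nat.lt_two_pow_self (n := n))
  calc (l + 1 : ℝ) * ((l + 1) * ((i + 1) * ((j + 1) * T)))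
      = (((l:ℝ) + 1) * ((l:ℝ) + 1) * ((i:ℝ) + 1) * ((j:ℝ) + 1)) * T := by ring
    _ ≤ ((2:ℝ) ^ l * 2 ^ l * 2 ^ i * 2 ^ j) * T := by
        refine mul_le_mul_of_nonneg_right ?_ hT0
        have hl := h2p l; have hi := h2p i; have hj := h2p j
        gcongr <;> positivity
    _ = Cf * Cg * ((2:ℝ) ^ (i + j + 2 * l) * (4 * Rm ^ 2) ^ (i + j + 2 * l)) := by
        rw [hT]
        have h24 : (2:ℝ) ^ l * 2 ^ l * 2 ^ i * 2 ^ j = 2 ^ (i + j + 2 * l) := by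
          rw [← pow_add, ← pow_add, ← pow_add]; congr 1; omega
        rw [h24]; ring
    _ = Cf * Cg * (8 * Rm ^ 2) ^ (i + j + 2 * l) := by
        rw [← mul_pow]; congr 2; ring
    _ ≤ Cf * Cg * ((8 * Rm ^ 2) ^ 2) ^ (i + j + l) := by
        rw [← pow_mul]
        refine mul_le_mul_of_nonneg_left ?_ (mul_nonneg hCf.le hCg.le)
        refine pow_le_pow_right₀ ?_ (by omega)
        nlinarith [hRm1]
end

section
/- For holomorphic germs f(q,y) and g(x,p) (independent of ξ) with one degree of freedom, the Borel dual product admits the Hadamard-type contour integral representation: (f * g)(ξ,q,p) = (1/(2πi))∮_{|x|=r} f(q, p + ξ/x)·g(q + x, p)·dx/x, valid for ξ, q, p small and suitable r > 0. -/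
open intervalIntegral Metric

open MeasureTheory Set Complex Filter in
/-- Taylor expansion of a function differentiable on a ball around 0, centered at `p`. -/
lemma taylor_hasSum_aux {F : ℂ → ℂ} {R : ℝ} (hF : DifferentiableOn ℂ F (ball (0:ℂ) R))
    {p w : ℂ} (hpw : ‖p‖ + ‖w‖ < R) :
    HasSum (fun k : ℕ => iteratedDeriv k F p / (k.factorial : ℂ) * w ^ k) (F (p + w)) := by
  have hsub : ball p (R - ‖p‖) ⊆ ball (0:ℂ) R := by
    intro z hz
    simp only [mem_ball, dist_eq_norm, sub_zero] at *
    calc ‖z‖ = ‖(z - p) + p‖ := by ring_nf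
    _ ≤ ‖z - p‖ + ‖p‖ := norm_add_le _ _
    _ < R := by linarith
  have hz : p + w ∈ ball p (R - ‖p‖) := by
    simp only [mem_ball, dist_eq_norm, add_sub_cancel_left]
    linarith [norm_nonneg p, norm_nonneg w]
  have H := Complex.hasSum_taylorSeries_on_ball (hF.mono hsub) hz
  have heq : (fun k : ℕ => iteratedDeriv k F p / (k.factorial : ℂ) * w ^ k)
      = fun n : ℕ => (n.factorial : ℂ)⁻¹ • (p + w - p) ^ n • iteratedDeriv n F p := by
    funext n
    simp only [add_sub_cancel_left, smul_eq_mul, div_eq_mul_inv]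
    ring
  exact heq ▸ H

open Filter in
lemma bound_of_summable_aux {u : ℕ → ℂ} (h : Summable u) :
    ∃ C : ℝ, 0 ≤ C ∧ ∀ k, ‖u k‖ ≤ C := by
  have h0 : Tendsto u atTop (nhds 0) := h.tendsto_atTop_zero
  have h1 : Tendsto (fun k => ‖u k‖) atTop (nhds 0) := by simpa using h0.norm
  obtain ⟨C, hC⟩ := h1.bddAbove_range
  refine ⟨C, le_trans (norm_nonneg (u 0)) (hC ⟨0, rfl⟩), fun k => hC ⟨k, rfl⟩⟩

/-- Hadamard-type contour integral representation of the Borel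
dual product of `ξ`-independent germs: for `f`, `g` holomorphic on a polydisc,
for `ξ, q, p` small and suitable `r > 0`,
`(f * g)(ξ,q,p) = Σ_k (1/k!)∂_p^k f·(1/k!)∂_q^k g·ξ^k
  = (1/(2πi)) ∮_{|x|=r} f(q, p + ξ/x) g(q + x, p) dx/x`. -/
theorem bstar_hadamard_contour (f g : ℂ → ℂ → ℂ) (R : ℝ) (hR : 0 < R)
    (hf : DifferentiableOn ℂ (fun z : ℂ × ℂ => f z.1 z.2) (ball (0 : ℂ) R ×ˢ ball (0 : ℂ) R))
    (hg : DifferentiableOn ℂ (fun z : ℂ × ℂ => g z.1 z.2) (ball (0 : ℂ) R ×ˢ ball (0 : ℂ) R)) :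
    ∃ δ : ℝ, 0 < δ ∧ ∀ (ξ q p : ℂ) (r : ℝ), 0 < r → r < δ → ‖ξ‖ < r * δ →
      ‖q‖ < δ → ‖p‖ < δ →
      (∑' k : ℕ,
          (iteratedDeriv k (f q) p / (k.factorial : ℂ)) *
            (iteratedDeriv k (fun x => g x p) q / (k.factorial : ℂ)) * ξ ^ k) =
        (1 / (2 * Real.pi * Complex.I)) *
          ∫ θ in (0 : ℝ)..(2 * Real.pi),
            f q (p + ξ / ((r : ℂ) * Complex.exp (Complex.I * (θ : ℂ)))) *
              g (q + (r : ℂ) * Complex.exp (Complex.I * (θ : ℂ))) p * Complex.I := by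
  classical
  refine ⟨R / 4, by linarith, fun ξ q p r hr hrδ hξ hq hp => ?_⟩
  have π_pos := Real.pi_pos
  set π := Real.pi
  open MeasureTheory Set Complex in
  -- notation
  set x : ℝ → ℂ := fun θ => (r : ℂ) * Complex.exp (Complex.I * (θ : ℂ)) with hxdef
  set a : ℕ → ℂ := fun k => iteratedDeriv k (f q) p / (k.factorial : ℂ) with hadef
  set b : ℕ → ℂ := fun k => iteratedDeriv k (fun x => g x p) q / (k.factorial : ℂ) with hbdef
  have hxne : ∀ θ : ℝ, x θ ≠ 0 := fun θ =>
    mul_ne_zero (by exact_mod_cast hr.ne') (Complex.exp_ne_zero _)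
  have hxnorm : ∀ θ : ℝ, ‖x θ‖ = r := by
    intro θ
    simp only [hxdef, norm_mul, Complex.norm_exp]
    simp [abs_of_pos hr, Complex.mul_re]
  -- membership facts
  have hq' : q ∈ ball (0 : ℂ) R := by
    simp only [mem_ball, dist_zero_right]; linarith
  have hp' : p ∈ ball (0 : ℂ) R := by
    simp only [mem_ball, dist_zero_right]; linarith
  -- slices are differentiable
  have hfq : DifferentiableOn ℂ (f q) (ball (0 : ℂ) R) := by
    have : DifferentiableOn ℂ ((fun z : ℂ × ℂ => f z.1 z.2) ∘ fun y => (q, y))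
        (ball (0 : ℂ) R) :=
      hf.comp ((differentiable_const q).prodMk differentiable_id).differentiableOn
        (fun y hy => ⟨hq', hy⟩)
    exact this
  have hgp : DifferentiableOn ℂ (fun x => g x p) (ball (0 : ℂ) R) := by
    have : DifferentiableOn ℂ ((fun z : ℂ × ℂ => g z.1 z.2) ∘ fun y => (y, p))
        (ball (0 : ℂ) R) :=
      hg.comp (differentiable_id.prodMk (differentiable_const p)).differentiableOn
        (fun y hy => ⟨hy, hp'⟩)
    exact this
  -- Taylor expansions
  have hfsum : ∀ w : ℂ, ‖w‖ < R / 2 → HasSum (fun k => a k * w ^ k) (f q (p + w)) := by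
    intro w hw
    exact taylor_hasSum_aux hfq (by linarith)
  have hgsum : ∀ w : ℂ, ‖w‖ < R / 2 → HasSum (fun m => b m * w ^ m) (g (q + w) p) := by
    intro w hw
    exact taylor_hasSum_aux hgp (by linarith)
  -- coefficient bounds
  have hnormR3 : ‖((R / 3 : ℝ) : ℂ)‖ = R / 3 := by
    rw [Complex.norm_real, Real.norm_eq_abs, abs_of_pos (by linarith)]
  obtain ⟨C, hC0, hCa⟩ := bound_of_summable_aux
    (hfsum ((R / 3 : ℝ) : ℂ) (by rw [hnormR3]; linarith)).summable
  obtain ⟨D, hD0, hDb⟩ := bound_of_summable_aux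
    (hgsum ((R / 3 : ℝ) : ℂ) (by rw [hnormR3]; linarith)).summable
  have haC : ∀ k : ℕ, ‖a k‖ * (R / 3) ^ k ≤ C := by
    intro k
    have := hCa k
    rwa [norm_mul, norm_pow, hnormR3] at this
  have hbD : ∀ m : ℕ, ‖b m‖ * (R / 3) ^ m ≤ D := by
    intro m
    have := hDb m
    rwa [norm_mul, norm_pow, hnormR3] at this
  have hR3 : (0:ℝ) < R / 3 := by linarith
  -- norm facts for the variables
  have hξx : ∀ θ : ℝ, ‖ξ / x θ‖ < R / 4 := by
    intro θ
    rw [norm_div, hxnorm, div_lt_iff₀ hr]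
    linarith [hξ]
  have hA : ∀ (θ : ℝ) (k : ℕ), ‖a k * (ξ / x θ) ^ k‖ ≤ C * (3 / 4) ^ k := by
    intro θ k
    rw [norm_mul, norm_pow]
    calc ‖a k‖ * ‖ξ / x θ‖ ^ k ≤ ‖a k‖ * (R / 4) ^ k :=
          mul_le_mul_of_nonneg_left (pow_le_pow_left₀ (norm_nonneg _) (hξx θ).le k)
            (norm_nonneg _)
    _ = ‖a k‖ * (R / 3) ^ k * (3 / 4) ^ k := by
          rw [mul_assoc, ← mul_pow]; ring_nf
    _ ≤ C * (3 / 4) ^ k := mul_le_mul_of_nonneg_right (haC k) (by positivity)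
  have hB : ∀ (θ : ℝ) (m : ℕ), ‖b m * (x θ) ^ m‖ ≤ D * (3 / 4) ^ m := by
    intro θ m
    rw [norm_mul, norm_pow, hxnorm]
    calc ‖b m‖ * r ^ m ≤ ‖b m‖ * (R / 4) ^ m :=
          mul_le_mul_of_nonneg_left (pow_le_pow_left₀ hr.le hrδ.le m) (norm_nonneg _)
    _ = ‖b m‖ * (R / 3) ^ m * (3 / 4) ^ m := by
          rw [mul_assoc, ← mul_pow]; ring_nf
    _ ≤ D * (3 / 4) ^ m := mul_le_mul_of_nonneg_right (hbD m) (by positivity)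
  have hgeo : Summable (fun k : ℕ => (3 / 4 : ℝ) ^ k) :=
    summable_geometric_of_lt_one (by norm_num) (by norm_num)
  have hsA : ∀ θ : ℝ, Summable (fun k => ‖a k * (ξ / x θ) ^ k‖) := fun θ =>
    Summable.of_nonneg_of_le (fun k => norm_nonneg _) (hA θ) (hgeo.mul_left C)
  have hsB : ∀ θ : ℝ, Summable (fun m => ‖b m * (x θ) ^ m‖) := fun θ =>
    Summable.of_nonneg_of_le (fun m => norm_nonneg _) (hB θ) (hgeo.mul_left D)
  -- the double-series expansion of the integrand
  set T : ℕ × ℕ → ℝ → ℂ :=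
    fun km θ => (a km.1 * (ξ / x θ) ^ km.1) * (b km.2 * (x θ) ^ km.2) * Complex.I with hTdef
  have hprod : ∀ θ : ℝ,
      f q (p + ξ / x θ) * g (q + x θ) p * Complex.I = ∑' km : ℕ × ℕ, T km θ := by
    intro θ
    have h1 := hfsum (ξ / x θ) (by linarith [hξx θ])
    have h2 := hgsum (x θ) (by rw [hxnorm]; linarith)
    rw [← h1.tsum_eq, ← h2.tsum_eq, tsum_mul_tsum_of_summable_norm (hsA θ) (hsB θ),
      ← tsum_mul_right]
  -- continuity of each term
  have hxc : Continuous x := by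
    apply continuous_const.mul
    exact Complex.continuous_exp.comp (continuous_const.mul Complex.continuous_ofReal)
  have hTc : ∀ km : ℕ × ℕ, Continuous (T km) := by
    rintro ⟨k, m⟩
    exact ((continuous_const.mul ((continuous_const.div hxc hxne).pow k)).mul
      (continuous_const.mul (hxc.pow m))).mul continuous_const
  -- the key computation
  have h2π : (0:ℝ) ≤ 2 * π := by linarith
  have key : (∫ θ in (0:ℝ)..(2 * π), f q (p + ξ / x θ) * g (q + x θ) p * Complex.I)
      = (2 * π * Complex.I) * ∑' k : ℕ, a k * b k * ξ ^ k := by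
    rw [intervalIntegral.integral_of_le h2π]
    have step1 : (∫ θ in Ioc (0:ℝ) (2 * π), f q (p + ξ / x θ) * g (q + x θ) p * Complex.I)
        = ∫ θ in Ioc (0:ℝ) (2 * π), ∑' km : ℕ × ℕ, T km θ :=
      integral_congr_ae (Filter.Eventually.of_forall fun θ => hprod θ)
    -- summable bound for integral_tsum
    have hTbound : ∀ (km : ℕ × ℕ) (θ : ℝ),
        ‖T km θ‖ ≤ C * D * ((3 / 4) ^ km.1 * (3 / 4) ^ km.2) := by
      rintro ⟨k, m⟩ θ
      calc ‖T (k, m) θ‖ = ‖a k * (ξ / x θ) ^ k‖ * ‖b m * (x θ) ^ m‖ := by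
            simp [hTdef, norm_mul]
      _ ≤ (C * (3 / 4) ^ k) * (D * (3 / 4) ^ m) := by
            apply mul_le_mul (hA θ k) (hB θ m) (norm_nonneg _)
            positivity
      _ = C * D * ((3 / 4) ^ k * (3 / 4) ^ m) := by ring
    have hu : Summable (fun km : ℕ × ℕ => C * D * ((3 / 4 : ℝ) ^ km.1 * (3 / 4) ^ km.2)) := by
      apply Summable.mul_left
      apply summable_mul_of_summable_norm (f := fun k : ℕ => (3/4:ℝ)^k)
        (g := fun k : ℕ => (3/4:ℝ)^k) <;>
        simpa [_root_.abs_of_nonneg] using hgeo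
    have step2 : (∫ θ in Ioc (0:ℝ) (2 * π), ∑' km : ℕ × ℕ, T km θ)
        = ∑' km : ℕ × ℕ, ∫ θ in Ioc (0:ℝ) (2 * π), T km θ := by
      apply MeasureTheory.integral_tsum
      · exact fun km => (hTc km).aestronglyMeasurable
      · have hle : ∀ km : ℕ × ℕ, (∫⁻ θ in Ioc (0:ℝ) (2 * π), ‖T km θ‖₊)
            ≤ ENNReal.ofReal (C * D * ((3 / 4) ^ km.1 * (3 / 4) ^ km.2) * (2 * π)) := by
          intro km
          calc (∫⁻ θ in Ioc (0:ℝ) (2 * π), ‖T km θ‖₊)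
              ≤ ∫⁻ _ in Ioc (0:ℝ) (2 * π),
                ENNReal.ofReal (C * D * ((3 / 4) ^ km.1 * (3 / 4) ^ km.2)) := by
                apply lintegral_mono
                intro θ
                simp only [← ENNReal.ofReal_coe_nnreal, coe_nnnorm]
                exact ENNReal.ofReal_le_ofReal (hTbound km θ)
          _ = ENNReal.ofReal (C * D * ((3 / 4) ^ km.1 * (3 / 4) ^ km.2))
                * volume (Ioc (0:ℝ) (2 * π)) := setLIntegral_const _ _
          _ = ENNReal.ofReal (C * D * ((3 / 4) ^ km.1 * (3 / 4) ^ km.2) * (2 * π)) := by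
                rw [Real.volume_Ioc, sub_zero, ← ENNReal.ofReal_mul (by positivity)]
        apply ne_top_of_le_ne_top _ (ENNReal.tsum_le_tsum hle)
        rw [← ENNReal.ofReal_tsum_of_nonneg (fun km => by positivity) (by
          simpa [mul_assoc] using hu.mul_right (2 * π))]
        exact ENNReal.ofReal_ne_top
    -- each off-diagonal integral vanishes
    have hoff : ∀ km : ℕ × ℕ, km.1 ≠ km.2 → (∫ θ in Ioc (0:ℝ) (2 * π), T km θ) = 0 := by
      rintro ⟨k, m⟩ hkm
      have hcc : ((m : ℂ) - (k : ℂ)) * Complex.I ≠ 0 := by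
        apply mul_ne_zero _ Complex.I_ne_zero
        rw [sub_ne_zero]
        exact_mod_cast Ne.symm hkm
      have hform : ∀ θ : ℝ, T (k, m) θ
          = (a k * b m * ξ ^ k * Complex.I * (r : ℂ) ^ m / (r : ℂ) ^ k)
            * Complex.exp ((((m : ℂ) - (k : ℂ)) * Complex.I) * (θ : ℂ)) := by
        intro θ
        have hrC : ((r : ℝ) : ℂ) ≠ 0 := by exact_mod_cast hr.ne'
        have hexp : ∀ n : ℕ, (Complex.exp (Complex.I * (θ : ℂ))) ^ n
            = Complex.exp ((n : ℂ) * (Complex.I * (θ : ℂ))) :=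
          fun n => (Complex.exp_nat_mul _ n).symm
        simp only [hTdef, hxdef, div_pow, mul_pow, hexp]
        rw [show (((m : ℂ) - (k : ℂ)) * Complex.I) * (θ : ℂ)
            = (m : ℂ) * (Complex.I * (θ : ℂ)) - (k : ℂ) * (Complex.I * (θ : ℂ)) by ring,
          Complex.exp_sub]
        field_simp
      simp only [hform]
      rw [← intervalIntegral.integral_of_le h2π, intervalIntegral.integral_const_mul,
        integral_exp_mul_complex hcc]
      have h1 : (((m : ℂ) - (k : ℂ)) * Complex.I) * ((2 * π : ℝ) : ℂ)
          = (((m : ℤ) - (k : ℤ) : ℤ) : ℂ) * (2 * (π : ℂ) * Complex.I) := by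
        push_cast; ring
      rw [h1, Complex.exp_int_mul_two_pi_mul_I]
      norm_num
    -- diagonal terms
    have hdiag : ∀ k : ℕ, (∫ θ in Ioc (0:ℝ) (2 * π), T (k, k) θ)
        = (2 * π : ℝ) • (a k * b k * ξ ^ k * Complex.I) := by
      intro k
      have hconst : ∀ θ : ℝ, T (k, k) θ = a k * b k * ξ ^ k * Complex.I := by
        intro θ
        have h1 : (ξ / x θ) ^ k * (x θ) ^ k = ξ ^ k := by
          rw [div_pow, div_mul_cancel₀]
          exact pow_ne_zero _ (hxne θ)
        calc T (k, k) θ = a k * b k * ((ξ / x θ) ^ k * (x θ) ^ k) * Complex.I := by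
              simp only [hTdef]; ring
        _ = a k * b k * ξ ^ k * Complex.I := by rw [h1]
      simp only [hconst]
      rw [setIntegral_const, Real.volume_real_Ioc_of_le h2π, sub_zero]
    -- assemble
    rw [step1, step2]
    have hinj : Function.Injective (fun k : ℕ => ((k, k) : ℕ × ℕ)) := by
      intro i j h
      simpa using congrArg Prod.fst h
    have hsupp : Function.support (fun km : ℕ × ℕ => ∫ θ in Ioc (0:ℝ) (2 * π), T km θ)
        ⊆ Set.range (fun k : ℕ => ((k, k) : ℕ × ℕ)) := by
      rintro ⟨k, m⟩ hmem
      by_contra hnot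
      apply hmem
      apply hoff
      intro hEq
      exact hnot ⟨k, Prod.ext rfl hEq⟩
    rw [← hinj.tsum_eq hsupp]
    simp only [hdiag]
    rw [← tsum_mul_left]
    congr 1
    funext k
    rw [Complex.real_smul]
    push_cast
    ring
  -- conclude
  have h2πI : (2 * (π : ℂ) * Complex.I) ≠ 0 := by
    refine mul_ne_zero (mul_ne_zero two_ne_zero ?_) Complex.I_ne_zero
    exact_mod_cast π_pos.ne'
  rw [key, ← mul_assoc, one_div, inv_mul_cancel₀ h2πI, one_mul]
end

section
/- Hypergeometric star-product identity: for complex exponents α, β, in the Borel dual algebra one has (1+p)^α * (1+q)^β = (1+p)^α (1+q)^β · F(−α, −β, 1; ξ/((1+p)(1+q))), where F(a,b,1;z) = Σ_{k≥0} ((a)_k (b)_k/(k!)²) z^k is the Gauss hypergeometric series; equivalently, the identity of formal power series Σ_k C(α,k)C(β,k)(1+p)^{α−k}(1+q)^{β−k} ξ^k holds. -/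
open Finset

/-- Generalized binomial coefficient `C(α,k) = α(α−1)⋯(α−k+1)/k!`. -/
noncomputable def gbinom (α : ℂ) (k : ℕ) : ℂ :=
  (∏ i ∈ range k, (α - (i : ℂ))) / (k.factorial : ℂ)

/-- The Borel dual product of two `ξ`-independent power series `f = Σ_j F_j p^j`
and `g = Σ_i G_i q^i`: the coefficient of `q^i p^j ξ^k` in
`f * g = Σ_k (1/k!)∂_p^k f·(1/k!)∂_q^k g·ξ^k`. -/
noncomputable def bstar0 (F G : ℕ → ℂ) : ℕ → ℕ → ℕ → ℂ := fun i j k =>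
  ((j + k).choose k : ℂ) * F (j + k) * ((i + k).choose k : ℂ) * G (i + k)

lemma gbinom_key (α : ℂ) (j k : ℕ) :
    ((j + k).choose k : ℂ) * gbinom α (j + k) = gbinom α k * gbinom (α - k) j := by
  unfold gbinom
  rw [add_comm j k, Finset.prod_range_add]
  have hfac : ((k + j).choose k : ℂ) * k.factorial * j.factorial = (k + j).factorial := by
    have h := Nat.choose_mul_factorial_mul_factorial (Nat.le_add_right k j)
    rw [Nat.add_sub_cancel_left] at h
    exact_mod_cast congrArg (Nat.cast : ℕ → ℂ) h
  have h1 : ((k + j).factorial : ℂ) ≠ 0 := Nat.cast_ne_zero.2 (Nat.factorial_ne_zero _)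
  have h2 : (k.factorial : ℂ) ≠ 0 := Nat.cast_ne_zero.2 (Nat.factorial_ne_zero _)
  have h3 : (j.factorial : ℂ) ≠ 0 := Nat.cast_ne_zero.2 (Nat.factorial_ne_zero _)
  have heq : ∀ i ∈ range j, α - ((k + i : ℕ) : ℂ) = (α - k) - i := by
    intro i _; push_cast; ring
  rw [Finset.prod_congr rfl heq]
  field_simp
  linear_combination (∏ i ∈ range k, (α - i)) * (∏ i ∈ range j, (α - k - i)) * hfac

/-- hypergeometric star-product identity
`(1+p)^α * (1+q)^β = (1+p)^α (1+q)^β F(−α,−β,1; ξ/((1+p)(1+q)))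
  = Σ_k C(α,k)C(β,k)(1+p)^{α−k}(1+q)^{β−k} ξ^k`,
stated as an identity of the coefficients of `q^i p^j ξ^k`. -/
theorem hypergeometric_star_identity (α β : ℂ) :
    bstar0 (gbinom α) (gbinom β) = fun i j k =>
      gbinom α k * gbinom β k * gbinom (α - (k : ℂ)) j * gbinom (β - (k : ℂ)) i := by
  funext i j k
  unfold bstar0
  linear_combination (((i + k).choose k : ℂ) * gbinom β (i + k)) * gbinom_key α j k +
    (gbinom α k * gbinom (α - k) j) * gbinom_key β i k
end

section
/- If A and B are finite subsets of ℂ, then the sum map (x,y) ↦ x + y restricts to a locally trivial (smooth) fibration from {(x,y) ∈ (ℂ∖A)×(ℂ∖B) : x+y ∈ ℂ∖(A ∪ B ∪ (A+B))} onto ℂ∖(A ∪ B ∪ (A+B)), where A+B = {a+b : a ∈ A, b ∈ B}. -/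
open Pointwise Metric

namespace SumFibAux

noncomputable def chi (S : Set ℂ) (ε : ℝ) (x : ℂ) : ℝ :=
  min 1 (max 0 (2 - infDist x S / ε))

lemma chi_nonneg (S : Set ℂ) (ε : ℝ) (x : ℂ) : 0 ≤ chi S ε x :=
  le_min zero_le_one (le_max_left _ _)

lemma chi_le_one (S : Set ℂ) (ε : ℝ) (x : ℂ) : chi S ε x ≤ 1 := min_le_left _ _

lemma chi_dist {S : Set ℂ} {ε : ℝ} (hε : 0 < ε) (x y : ℂ) :
    |chi S ε x - chi S ε y| ≤ ε⁻¹ * dist x y := by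
  have h1 : |chi S ε x - chi S ε y| ≤
      |max 0 (2 - infDist x S / ε) - max 0 (2 - infDist y S / ε)| := by
    refine le_trans (abs_min_sub_min_le_max 1 _ 1 _) ?_
    simp
  have h2 : |max 0 (2 - infDist x S / ε) - max 0 (2 - infDist y S / ε)| ≤
      |(2 - infDist x S / ε) - (2 - infDist y S / ε)| := by
    refine le_trans (abs_max_sub_max_le_max 0 _ 0 _) ?_
    simp
  have h3 : |(2 - infDist x S / ε) - (2 - infDist y S / ε)| =
      |infDist x S - infDist y S| / ε := by
    have : (2 - infDist x S / ε) - (2 - infDist y S / ε)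
        = (infDist y S - infDist x S) / ε := by ring
    rw [this, abs_div, abs_of_pos hε, abs_sub_comm]
  have h4 : |infDist x S - infDist y S| ≤ dist x y := by
    rw [abs_sub_le_iff]
    constructor
    · linarith [infDist_le_infDist_add_dist (x := x) (y := y) (s := S)]
    · linarith [infDist_le_infDist_add_dist (x := y) (y := x) (s := S),
        dist_comm x y]
  calc |chi S ε x - chi S ε y| ≤ |infDist x S - infDist y S| / ε := by
        rw [← h3]; exact h1.trans h2
    _ ≤ dist x y / ε := by gcongr
    _ = ε⁻¹ * dist x y := by ring

lemma chi_eq_zero {S : Set ℂ} {ε : ℝ} (hε : 0 < ε) {x : ℂ}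
    (h : 2 * ε ≤ infDist x S) : chi S ε x = 0 := by
  have : 2 - infDist x S / ε ≤ 0 := by
    rw [sub_nonpos, le_div_iff₀ hε]; linarith
  simp [chi, max_eq_left this, min_eq_right]

lemma chi_eq_one {S : Set ℂ} {ε : ℝ} (hε : 0 < ε) {x : ℂ}
    (h : infDist x S ≤ ε) : chi S ε x = 1 := by
  have h1 : (1 : ℝ) ≤ 2 - infDist x S / ε := by
    have : infDist x S / ε ≤ 1 := (div_le_one hε).mpr h
    linarith
  have : (1:ℝ) ≤ max 0 (2 - infDist x S / ε) := le_max_of_le_right h1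
  simp [chi, min_eq_left this]

lemma chi_continuous {S : Set ℂ} {ε : ℝ} (hε : 0 < ε) : Continuous (chi S ε) := by
  have : LipschitzWith (Real.toNNReal ε⁻¹) (chi S ε) := by
    apply LipschitzWith.of_dist_le_mul
    intro x y
    rw [Real.dist_eq]
    refine (chi_dist hε x y).trans ?_
    gcongr
    exact (Real.coe_toNNReal _ (inv_nonneg.mpr hε.le)).ge
  exact this.continuous

/-- the deformation map -/
noncomputable def hmap (S : Set ℂ) (ε : ℝ) (ξ₀ ξ x : ℂ) : ℂ :=
  x - (ξ - ξ₀) * (chi S ε x : ℂ)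

lemma hmap_continuous {S : Set ℂ} {ε : ℝ} (hε : 0 < ε) (ξ₀ : ℂ) :
    Continuous fun p : ℂ × ℂ => hmap S ε ξ₀ p.1 p.2 := by
  have h := chi_continuous (S := S) hε
  unfold hmap
  fun_prop

/-- key metric estimate -/
lemma hmap_dist {S : Set ℂ} {ε : ℝ} (hε : 0 < ε) {ξ₀ ξ ξ' : ℂ}
    (hξ' : dist ξ' ξ₀ ≤ ε / 2) (x x' : ℂ) :
    dist x x' ≤ 2 * (dist (hmap S ε ξ₀ ξ x) (hmap S ε ξ₀ ξ' x') + dist ξ ξ') := by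
  have key : x - x' = (hmap S ε ξ₀ ξ x - hmap S ε ξ₀ ξ' x')
      + ((ξ - ξ') * (chi S ε x : ℂ) + (ξ' - ξ₀) * ((chi S ε x : ℂ) - (chi S ε x' : ℂ))) := by
    unfold hmap; ring
  have e1 : ‖(ξ - ξ') * (chi S ε x : ℂ)‖ ≤ dist ξ ξ' := by
    rw [norm_mul]
    have : ‖(chi S ε x : ℂ)‖ ≤ 1 := by
      rw [Complex.norm_real, Real.norm_eq_abs, abs_of_nonneg (chi_nonneg S ε x)]
      exact chi_le_one S ε x
    calc ‖ξ - ξ'‖ * ‖(chi S ε x : ℂ)‖ ≤ ‖ξ - ξ'‖ * 1 := by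
          gcongr
      _ = dist ξ ξ' := by rw [mul_one, dist_eq_norm]
  have e2 : ‖(ξ' - ξ₀) * ((chi S ε x : ℂ) - (chi S ε x' : ℂ))‖ ≤ dist x x' / 2 := by
    rw [norm_mul]
    have h1 : ‖ξ' - ξ₀‖ ≤ ε / 2 := by rwa [← dist_eq_norm]
    have h2 : ‖(chi S ε x : ℂ) - (chi S ε x' : ℂ)‖ ≤ ε⁻¹ * dist x x' := by
      rw [← Complex.ofReal_sub, Complex.norm_real, Real.norm_eq_abs]
      exact chi_dist hε x x'
    calc ‖ξ' - ξ₀‖ * ‖(chi S ε x : ℂ) - (chi S ε x' : ℂ)‖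
        ≤ (ε / 2) * (ε⁻¹ * dist x x') := by
          apply mul_le_mul h1 h2 (norm_nonneg _) (by positivity)
      _ = dist x x' / 2 := by field_simp
  have tri : ‖x - x'‖ ≤ ‖hmap S ε ξ₀ ξ x - hmap S ε ξ₀ ξ' x'‖
      + (‖(ξ - ξ') * (chi S ε x : ℂ)‖ + ‖(ξ' - ξ₀) * ((chi S ε x : ℂ) - (chi S ε x' : ℂ))‖) := by
    rw [key]
    exact (norm_add_le _ _).trans (by gcongr; exact norm_add_le _ _)
  rw [dist_eq_norm x x'] at e2 ⊢
  rw [dist_eq_norm (hmap S ε ξ₀ ξ x) (hmap S ε ξ₀ ξ' x')]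
  have n1 : (0:ℝ) ≤ ‖hmap S ε ξ₀ ξ x - hmap S ε ξ₀ ξ' x'‖ := norm_nonneg _
  have n2 : (0:ℝ) ≤ dist ξ ξ' := dist_nonneg
  linarith

lemma hmap_inj {S : Set ℂ} {ε : ℝ} (hε : 0 < ε) {ξ₀ ξ : ℂ}
    (hξ : dist ξ ξ₀ ≤ ε / 2) {x x' : ℂ}
    (h : hmap S ε ξ₀ ξ x = hmap S ε ξ₀ ξ x') : x = x' := by
  have := hmap_dist (S := S) (ξ := ξ) (ξ' := ξ) hε hξ x x'
  rw [h] at this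
  simp at this
  have : dist x x' ≤ 0 := by simpa using this
  exact dist_le_zero.mp this

lemma hmap_surj {S : Set ℂ} {ε : ℝ} (hε : 0 < ε) {ξ₀ ξ : ℂ}
    (hξ : dist ξ ξ₀ ≤ ε / 2) (u : ℂ) : ∃ x, hmap S ε ξ₀ ξ x = u := by
  set F : ℂ → ℂ := fun x => u + (ξ - ξ₀) * (chi S ε x : ℂ) with hF
  have hcontr : ContractingWith (1/2 : NNReal) F := by
    constructor
    · exact NNReal.half_lt_self one_ne_zero
    · apply LipschitzWith.of_dist_le_mul
      intro x y
      have : dist (F x) (F y) = ‖(ξ - ξ₀) * ((chi S ε x : ℂ) - (chi S ε y : ℂ))‖ := by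
        rw [dist_eq_norm]; congr 1; rw [hF]; ring
      rw [this, norm_mul]
      have h1 : ‖ξ - ξ₀‖ ≤ ε / 2 := by rwa [← dist_eq_norm]
      have h2 : ‖(chi S ε x : ℂ) - (chi S ε y : ℂ)‖ ≤ ε⁻¹ * dist x y := by
        rw [← Complex.ofReal_sub, Complex.norm_real, Real.norm_eq_abs]
        exact chi_dist hε x y
      calc ‖ξ - ξ₀‖ * ‖(chi S ε x : ℂ) - (chi S ε y : ℂ)‖
          ≤ (ε / 2) * (ε⁻¹ * dist x y) :=
            mul_le_mul h1 h2 (norm_nonneg _) (by positivity)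
        _ = (1/2) * dist x y := by field_simp
        _ = ((1/2 : NNReal) : ℝ) * dist x y := by norm_num
  refine ⟨hcontr.fixedPoint F, ?_⟩
  have hfix := hcontr.fixedPoint_isFixedPt
  have hfix2 : u + (ξ - ξ₀) * (chi S ε (hcontr.fixedPoint F) : ℂ)
      = hcontr.fixedPoint F := hfix
  unfold hmap
  linear_combination -hfix2

end SumFibAux

open Pointwise Metric SumFibAux

/-- for finite `A, B ⊂ ℂ`, the sum map `(x,y) ↦ x+y` is a locally
trivial fibration from `{(x,y) : x ∉ A, y ∉ B, x+y ∉ A ∪ B ∪ (A+B)}` onto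
`ℂ∖(A ∪ B ∪ (A+B))`: every base point `ξ₀` has an open neighbourhood `U` over
which the map is trivialized, with fibre `{x : x ∉ A, ξ₀ − x ∉ B}`. -/
theorem sum_map_locally_trivial (A B : Finset ℂ) :
    ∀ ξ₀ : ℂ, ξ₀ ∉ (A : Set ℂ) ∪ (B : Set ℂ) ∪ ((A : Set ℂ) + (B : Set ℂ)) →
      ∃ U : Set ℂ, IsOpen U ∧ ξ₀ ∈ U ∧
        U ⊆ ((A : Set ℂ) ∪ (B : Set ℂ) ∪ ((A : Set ℂ) + (B : Set ℂ)))ᶜ ∧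
        ∃ e : {z : ℂ × ℂ // z.1 ∉ (A : Set ℂ) ∧ z.2 ∉ (B : Set ℂ) ∧ z.1 + z.2 ∈ U} ≃ₜ
            U × {x : ℂ // x ∉ (A : Set ℂ) ∧ ξ₀ - x ∉ (B : Set ℂ)},
          ∀ z, ((e z).1 : ℂ) = z.1.1 + z.1.2 := by
  intro ξ₀ hξ₀
  classical
  have hBadfin : ((A : Set ℂ) ∪ (B : Set ℂ) ∪ ((A : Set ℂ) + (B : Set ℂ))).Finite :=
    (A.finite_toSet.union B.finite_toSet).union (A.finite_toSet.add B.finite_toSet)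
  obtain ⟨r, hr, hball⟩ : ∃ r > 0, Metric.ball ξ₀ r ⊆
      ((A : Set ℂ) ∪ (B : Set ℂ) ∪ ((A : Set ℂ) + (B : Set ℂ)))ᶜ :=
    Metric.isOpen_iff.mp hBadfin.isClosed.isOpen_compl ξ₀ hξ₀
  set S : Set ℂ := insert ξ₀ ((fun b => ξ₀ - b) '' (B : Set ℂ)) with hSdef
  have hSne : S.Nonempty := ⟨ξ₀, Set.mem_insert _ _⟩
  have hSclosed : IsClosed S := ((B.finite_toSet.image _).insert ξ₀).isClosed
  have hAnotS : ∀ a ∈ (A : Set ℂ), a ∉ S := by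
    intro a ha haS
    rcases Set.mem_insert_iff.mp haS with h | ⟨b, hb, hba⟩
    · exact hξ₀ (Or.inl (Or.inl (h ▸ ha)))
    · have hba' : ξ₀ = a + b := by linear_combination hba
      exact hξ₀ (Or.inr (hba' ▸ Set.add_mem_add ha hb))
  have hApos : ∀ a ∈ (A : Set ℂ), 0 < infDist a S := fun a ha =>
    (hSclosed.notMem_iff_infDist_pos hSne).mp (hAnotS a ha)
  obtain ⟨ε, hε, hAε⟩ : ∃ ε > 0, ∀ a ∈ (A : Set ℂ), 2 * ε ≤ infDist a S := by
    by_cases hA : A.Nonempty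
    · obtain ⟨a₀, ha₀, hmin⟩ := A.exists_min_image (fun a => infDist a S) hA
      have h0 : 0 < infDist (a₀ : ℂ) S := hApos a₀ (by exact_mod_cast ha₀)
      refine ⟨infDist (a₀ : ℂ) S / 2, by positivity, ?_⟩
      intro a ha
      have := hmin a (by exact_mod_cast ha)
      linarith
    · exact ⟨1, one_pos, fun a ha => absurd ⟨a, by exact_mod_cast ha⟩ hA⟩
  refine ⟨Metric.ball ξ₀ (min (ε / 2) r), Metric.isOpen_ball,
    Metric.mem_ball_self (lt_min (by positivity) hr),
    (Metric.ball_subset_ball (min_le_right _ _)).trans hball, ?_⟩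
  set U : Set ℂ := Metric.ball ξ₀ (min (ε / 2) r) with hUdef
  have hUd : ∀ ξ ∈ U, dist ξ ξ₀ ≤ ε / 2 := fun ξ hξ =>
    le_of_lt (lt_of_lt_of_le (Metric.mem_ball.mp hξ) (min_le_left _ _))
  have hfixA : ∀ a ∈ (A : Set ℂ), ∀ ξ : ℂ, hmap S ε ξ₀ ξ a = a := by
    intro a ha ξ
    have : chi S ε a = 0 := chi_eq_zero hε (hAε a ha)
    simp [hmap, this]
  have hmoveB : ∀ b ∈ (B : Set ℂ), ∀ ξ : ℂ, dist ξ ξ₀ ≤ ε / 2 →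
      hmap S ε ξ₀ ξ (ξ - b) = ξ₀ - b := by
    intro b hb ξ hξ
    have hmem : ξ₀ - b ∈ S := Set.mem_insert_of_mem _ ⟨b, hb, rfl⟩
    have hd : infDist (ξ - b) S ≤ ε := by
      refine le_trans (infDist_le_dist_of_mem hmem) ?_
      have hdd : dist (ξ - b) (ξ₀ - b) = dist ξ ξ₀ := by
        rw [dist_eq_norm, dist_eq_norm]
        congr 1
        ring
      rw [hdd]; linarith
    have : chi S ε (ξ - b) = 1 := chi_eq_one hε hd
    unfold hmap
    rw [this]
    push_cast
    ring
  choose g hg using fun (ξ : ℂ) (h : dist ξ ξ₀ ≤ ε / 2) (u : ℂ) =>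
    hmap_surj (ξ₀ := ξ₀) hε h u
  -- forward membership
  have fwdA : ∀ ξ ∈ U, ∀ x : ℂ, x ∉ (A : Set ℂ) → hmap S ε ξ₀ ξ x ∉ (A : Set ℂ) := by
    intro ξ hξ x hx hmem
    have h1 : hmap S ε ξ₀ ξ (hmap S ε ξ₀ ξ x) = hmap S ε ξ₀ ξ x := hfixA _ hmem ξ
    have h2 : hmap S ε ξ₀ ξ x = x := hmap_inj hε (hUd ξ hξ) h1
    rw [h2] at hmem
    exact hx hmem
  have fwdB : ∀ ξ ∈ U, ∀ x : ℂ, ξ - x ∉ (B : Set ℂ) →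
      ξ₀ - hmap S ε ξ₀ ξ x ∉ (B : Set ℂ) := by
    intro ξ hξ x hx hmem
    set w := ξ₀ - hmap S ε ξ₀ ξ x with hw
    have h1 : hmap S ε ξ₀ ξ x = hmap S ε ξ₀ ξ (ξ - w) := by
      rw [hmoveB w hmem ξ (hUd ξ hξ), hw]
      ring
    have h2 : x = ξ - w := hmap_inj hε (hUd ξ hξ) h1
    apply hx
    have h3 : ξ - x = w := by rw [h2]; ring
    rw [h3]; exact hmem
  -- backward membership
  have bwdA : ∀ ξ (h : dist ξ ξ₀ ≤ ε / 2) (u : ℂ), u ∉ (A : Set ℂ) →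
      g ξ h u ∉ (A : Set ℂ) := by
    intro ξ h u hu hmem
    have h1 : hmap S ε ξ₀ ξ (g ξ h u) = g ξ h u := hfixA _ hmem ξ
    rw [hg ξ h u] at h1
    rw [← h1] at hmem
    exact hu hmem
  have bwdB : ∀ ξ (h : dist ξ ξ₀ ≤ ε / 2) (u : ℂ), ξ₀ - u ∉ (B : Set ℂ) →
      ξ - g ξ h u ∉ (B : Set ℂ) := by
    intro ξ h u hu hmem
    set b := ξ - g ξ h u with hb
    have h1 : g ξ h u = ξ - b := by rw [hb]; ring
    have h2 : u = ξ₀ - b := by rw [← hg ξ h u, h1, hmoveB b hmem ξ h]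
    apply hu
    rw [h2]
    have : ξ₀ - (ξ₀ - b) = b := by ring
    rw [this]; exact hmem
  have hgd : ∀ p : U × {x : ℂ // x ∉ (A : Set ℂ) ∧ ξ₀ - x ∉ (B : Set ℂ)},
      dist (p.1 : ℂ) ξ₀ ≤ ε / 2 := fun p => hUd _ p.1.2
  -- continuity of the inverse core map
  have hGlip : ∀ p q : U × {x : ℂ // x ∉ (A : Set ℂ) ∧ ξ₀ - x ∉ (B : Set ℂ)},
      dist (g (p.1 : ℂ) (hgd p) (p.2 : ℂ)) (g (q.1 : ℂ) (hgd q) (q.2 : ℂ)) ≤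
        4 * dist p q := by
    intro p q
    have h1 := hmap_dist (S := S) (ξ := (p.1 : ℂ)) (ξ' := (q.1 : ℂ)) hε (hgd q)
      (g (p.1 : ℂ) (hgd p) (p.2 : ℂ)) (g (q.1 : ℂ) (hgd q) (q.2 : ℂ))
    rw [hg, hg] at h1
    have h2 : dist ((p.2 : ℂ)) ((q.2 : ℂ)) ≤ dist p q := by
      calc dist ((p.2 : ℂ)) ((q.2 : ℂ)) = dist p.2 q.2 := (Subtype.dist_eq _ _).symm
        _ ≤ dist p q := by rw [Prod.dist_eq]; exact le_max_right _ _
    have h3 : dist ((p.1 : ℂ)) ((q.1 : ℂ)) ≤ dist p q := by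
      calc dist ((p.1 : ℂ)) ((q.1 : ℂ)) = dist p.1 q.1 := (Subtype.dist_eq _ _).symm
        _ ≤ dist p q := by rw [Prod.dist_eq]; exact le_max_left _ _
    linarith
  have hGcont : Continuous fun p : U × {x : ℂ // x ∉ (A : Set ℂ) ∧ ξ₀ - x ∉ (B : Set ℂ)} =>
      g (p.1 : ℂ) (hgd p) (p.2 : ℂ) := by
    refine (LipschitzWith.of_dist_le_mul (K := 4) ?_).continuous
    intro p q
    simpa using hGlip p q
  refine ⟨⟨⟨fun z => (⟨z.1.1 + z.1.2, z.2.2.2⟩,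
      ⟨hmap S ε ξ₀ (z.1.1 + z.1.2) z.1.1,
        fwdA _ z.2.2.2 _ z.2.1,
        fwdB _ z.2.2.2 z.1.1 (by
          have : z.1.1 + z.1.2 - z.1.1 = z.1.2 := by ring
          rw [this]; exact z.2.2.1)⟩),
    fun p => ⟨(g (p.1 : ℂ) (hgd p) (p.2 : ℂ),
        (p.1 : ℂ) - g (p.1 : ℂ) (hgd p) (p.2 : ℂ)),
      bwdA _ _ _ p.2.2.1,
      bwdB _ _ _ p.2.2.2,
      (by
        have : g (p.1 : ℂ) (hgd p) (p.2 : ℂ) +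
            ((p.1 : ℂ) - g (p.1 : ℂ) (hgd p) (p.2 : ℂ)) = (p.1 : ℂ) := by ring
        rw [this]; exact p.1.2)⟩,
    ?_, ?_⟩, ?_, ?_⟩, fun z => rfl⟩
  · -- left inverse
    intro z
    apply Subtype.ext
    have hginv : ∀ (h : dist (z.1.1 + z.1.2) ξ₀ ≤ ε / 2),
        g (z.1.1 + z.1.2) h (hmap S ε ξ₀ (z.1.1 + z.1.2) z.1.1) = z.1.1 := by
      intro h
      exact hmap_inj hε h (hg (z.1.1 + z.1.2) h (hmap S ε ξ₀ (z.1.1 + z.1.2) z.1.1))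
    refine Prod.ext ?_ ?_
    · show g (z.1.1 + z.1.2) _ (hmap S ε ξ₀ (z.1.1 + z.1.2) z.1.1) = z.1.1
      exact hginv _
    · show z.1.1 + z.1.2 - g (z.1.1 + z.1.2) _ (hmap S ε ξ₀ (z.1.1 + z.1.2) z.1.1) = z.1.2
      rw [hginv _]
      ring
  · -- right inverse
    intro p
    refine Prod.ext (Subtype.ext ?_) (Subtype.ext ?_)
    · show g (p.1 : ℂ) (hgd p) (p.2 : ℂ) +
        ((p.1 : ℂ) - g (p.1 : ℂ) (hgd p) (p.2 : ℂ)) = (p.1 : ℂ)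
      ring
    · have harg : g (p.1 : ℂ) (hgd p) (p.2 : ℂ) +
          ((p.1 : ℂ) - g (p.1 : ℂ) (hgd p) (p.2 : ℂ)) = (p.1 : ℂ) := by ring
      show hmap S ε ξ₀ (g (p.1 : ℂ) (hgd p) (p.2 : ℂ) +
          ((p.1 : ℂ) - g (p.1 : ℂ) (hgd p) (p.2 : ℂ)))
          (g (p.1 : ℂ) (hgd p) (p.2 : ℂ)) = (p.2 : ℂ)
      rw [harg]
      exact hg _ _ _
  · -- continuity of toFun
    refine Continuous.prodMk (Continuous.subtype_mk ?_ _) (Continuous.subtype_mk ?_ _)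
    · fun_prop
    · have hc : Continuous fun z : {z : ℂ × ℂ // z.1 ∉ (A : Set ℂ) ∧ z.2 ∉ (B : Set ℂ) ∧ z.1 + z.2 ∈ U} =>
          ((z : ℂ × ℂ).1 + (z : ℂ × ℂ).2, (z : ℂ × ℂ).1) := by fun_prop
      exact (hmap_continuous (S := S) hε ξ₀).comp hc
  · -- continuity of invFun
    exact Continuous.subtype_mk
      (hGcont.prodMk ((continuous_subtype_val.comp continuous_fst).sub hGcont)) _
end
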